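/- For every p ∈ [0, 1/8), the probability T_n^{(3)}(p) that the unit cube [0,1]^3 is tileable by available order-n tiles tends to 0 as n → ∞; in particular p_c(3) ≥ 1/8, where p_c(3) := inf{ p ∈ [0,1] : lim_{n→∞} T_n^{(3)}(p) = 1 }. -/

import Mathlib

open Set Filter Topology

noncomputable section

/-- The 3-dimensional dyadic tile
`[a/2^i, (a+1)/2^i] × [b/2^j, (b+1)/2^j] × [c/2^k, (c+1)/2^k]` as a subset of `ℝ × ℝ × ℝ`. -/
def dyadicTile3 (i j k a b c : ℕ) : Set (ℝ × ℝ × ℝ) :=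
  Set.Icc ((a : ℝ) / 2 ^ i) (((a : ℝ) + 1) / 2 ^ i) ×ˢ
    (Set.Icc ((b : ℝ) / 2 ^ j) (((b : ℝ) + 1) / 2 ^ j) ×ˢ
      Set.Icc ((c : ℝ) / 2 ^ k) (((c : ℝ) + 1) / 2 ^ k))

/-- `t` is a 3-dimensional dyadic tile of order `n` contained in the unit cube. -/
def IsDyadicTile3 (n : ℕ) (t : Set (ℝ × ℝ × ℝ)) : Prop :=
  ∃ i j k a b c : ℕ, i + j + k = n ∧ a < 2 ^ i ∧ b < 2 ^ j ∧ c < 2 ^ k ∧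
    t = dyadicTile3 i j k a b c

/-- `F` is a tiling of the region `R` by 3-dimensional dyadic tiles of order `n`. -/
def IsTiling3 (n : ℕ) (F : Set (Set (ℝ × ℝ × ℝ))) (R : Set (ℝ × ℝ × ℝ)) : Prop :=
  (∀ t ∈ F, IsDyadicTile3 n t) ∧ ⋃₀ F = R ∧
    F.Pairwise fun s t => interior s ∩ interior t = ∅

def unitCube : Set (ℝ × ℝ × ℝ) :=
  Set.Icc (0 : ℝ) 1 ×ˢ (Set.Icc (0 : ℝ) 1 ×ˢ Set.Icc (0 : ℝ) 1)

/-- Index type for the 3-dimensional dyadic tiles of order `n`: orders `i`, `j`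
(with `k = n - i - j`) of the three dyadic intervals, together with their positions. -/
abbrev TileIndex3 (n : ℕ) : Type :=
  {v : (Fin (n + 1) × Fin (n + 1)) × Fin (2 ^ n) × Fin (2 ^ n) × Fin (2 ^ n) //
    (v.1.1 : ℕ) + (v.1.2 : ℕ) ≤ n ∧ (v.2.1 : ℕ) < 2 ^ (v.1.1 : ℕ) ∧
      (v.2.2.1 : ℕ) < 2 ^ (v.1.2 : ℕ) ∧
      (v.2.2.2 : ℕ) < 2 ^ (n - (v.1.1 : ℕ) - (v.1.2 : ℕ))}

/-- The order-`n` 3-dimensional tile corresponding to an index. -/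
def tileOf3 (n : ℕ) (x : TileIndex3 n) : Set (ℝ × ℝ × ℝ) :=
  dyadicTile3 (x.1.1.1 : ℕ) (x.1.1.2 : ℕ) (n - (x.1.1.1 : ℕ) - (x.1.1.2 : ℕ))
    (x.1.2.1 : ℕ) (x.1.2.2.1 : ℕ) (x.1.2.2.2 : ℕ)

/-- The set `S` of available order-`n` tiles admits a tiling of the unit cube. -/
def TileableCube (n : ℕ) (S : Finset (TileIndex3 n)) : Prop :=
  ∃ F : Set (Set (ℝ × ℝ × ℝ)), (∀ t ∈ F, ∃ x ∈ S, t = tileOf3 n x) ∧ IsTiling3 n F unitCube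

open Classical in
/-- `T³_n(p)`: the probability that the unit cube is tileable by available order-`n` tiles,
when each order-`n` tile is available independently with probability `p`. -/
def T3 (n : ℕ) (p : ℝ) : ℝ :=
  ∑ S : Finset (TileIndex3 n),
    if TileableCube n S then
      p ^ S.card * (1 - p) ^ (Fintype.card (TileIndex3 n) - S.card) else 0

/-- The critical probability `p_c(3)` in dimension 3. -/
def pc3 : ℝ :=
  sInf {p : ℝ | p ∈ Set.Icc (0 : ℝ) 1 ∧ Tendsto (fun n => T3 n p) atTop (𝓝 1)}

open Finset

noncomputable section Dyadic
open scoped Classical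

/-! ### Generic sum helpers -/

lemma sum_le_of_injOn {α β : Type*} (s : Finset α) (t : Finset β) (e : α → β)
    (he : ∀ a ∈ s, ∀ a' ∈ s, e a = e a' → a = a') (hm : ∀ a ∈ s, e a ∈ t)
    (f : α → ℝ) (g : β → ℝ) (hfg : ∀ a ∈ s, f a = g (e a)) (hg : ∀ b ∈ t, 0 ≤ g b) :
    ∑ a ∈ s, f a ≤ ∑ b ∈ t, g b := by
  calc ∑ a ∈ s, f a = ∑ a ∈ s, g (e a) := Finset.sum_congr rfl hfg
    _ = ∑ b ∈ s.image e, g b := (Finset.sum_image he).symm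
    _ ≤ ∑ b ∈ t, g b := by
        apply Finset.sum_le_sum_of_subset_of_nonneg
        · intro b hb
          rcases Finset.mem_image.1 hb with ⟨a, ha, rfl⟩
          exact hm a ha
        · intro b hb _; exact hg b hb

/-! ### 1D dyadic intervals (at global resolution `2^n`), as finsets of cells -/

/-- cells of the dyadic interval `[a/2^i, (a+1)/2^i]` at resolution `2^n`. -/
def dIv (n i a : ℕ) : Finset ℕ := Finset.Ico (a * 2 ^ (n - i)) ((a + 1) * 2 ^ (n - i))

lemma mem_dIv {n i a x : ℕ} : x ∈ dIv n i a ↔ a * 2 ^ (n - i) ≤ x ∧ x < (a + 1) * 2 ^ (n - i) :=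
  Finset.mem_Ico

lemma dIv_nonempty (n i a : ℕ) : (dIv n i a).Nonempty := by
  refine ⟨a * 2 ^ (n - i), mem_dIv.2 ⟨le_rfl, ?_⟩⟩
  have : (0:ℕ) < 2 ^ (n - i) := pow_pos (by norm_num) _
  nlinarith

lemma card_dIv (n i a : ℕ) : (dIv n i a).card = 2 ^ (n - i) := by
  simp only [dIv, Nat.card_Ico]
  have h2 : (a + 1) * 2 ^ (n - i) = a * 2 ^ (n - i) + 2 ^ (n - i) := by ring
  have hp : 0 < 2 ^ (n - i) := pow_pos (by norm_num) _
  omega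

lemma dIv_subset_range {n i a : ℕ} (hi : i ≤ n) (ha : a < 2 ^ i) :
    dIv n i a ⊆ Finset.range (2 ^ n) := by
  intro x hx
  rcases mem_dIv.1 hx with ⟨_, h2⟩
  have : (a + 1) * 2 ^ (n - i) ≤ 2 ^ i * 2 ^ (n - i) := Nat.mul_le_mul_right _ (by omega)
  rw [Finset.mem_range]
  calc x < (a+1) * 2 ^ (n-i) := h2
    _ ≤ 2 ^ i * 2 ^ (n - i) := this
    _ = 2 ^ n := by rw [← pow_add]; congr 1; omega

/-- a dyadic interval strictly deeper than `(i,a)` lies in one of the halves. -/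
lemma dIv_half {n i a i' a' : ℕ} (hi' : i' ≤ n) (hii : i + 1 ≤ i') :
    (∀ x ∈ dIv n i' a', x < (2*a+1) * 2 ^ (n - (i+1))) ∨
    (∀ x ∈ dIv n i' a', (2*a+1) * 2 ^ (n - (i+1)) ≤ x) := by
  set M := 2 ^ (n - i') with hM
  have hdvd : 2 ^ (n - (i+1)) = 2 ^ ((n - (i+1)) - (n - i')) * M := by
    rw [hM, ← pow_add]; congr 1; omega
  set m := (2*a+1) * 2 ^ ((n - (i+1)) - (n - i')) with hm
  have hmid : (2*a+1) * 2 ^ (n - (i+1)) = m * M := by rw [hdvd, hm]; ring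
  rcases le_or_gt (a' + 1) m with h | h
  · left; intro x hx
    rcases mem_dIv.1 hx with ⟨_, h2⟩
    rw [hmid]
    calc x < (a' + 1) * M := h2
      _ ≤ m * M := Nat.mul_le_mul_right _ h
  · right; intro x hx
    rcases mem_dIv.1 hx with ⟨h1, _⟩
    rw [hmid]
    calc m * M ≤ a' * M := Nat.mul_le_mul_right _ (by omega)
      _ ≤ x := h1

/-- subset of dyadic intervals forces deeper-or-equal order -/
lemma dIv_subset_le {n i a i' a' : ℕ} (hi : i ≤ n) (hi' : i' ≤ n)
    (h : dIv n i' a' ⊆ dIv n i a) : i ≤ i' := by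
  have hc := Finset.card_le_card h
  rw [card_dIv, card_dIv] at hc
  have := (Nat.pow_le_pow_iff_right (by norm_num : 1 < 2)).1 hc
  omega

lemma dIv_subset_eq {n i a i' a' : ℕ} (h : dIv n i' a' ⊆ dIv n i a) (hii : i' = i) :
    a' = a := by
  subst hii
  have h1 := h (mem_dIv.2 ⟨le_rfl, by
    have : (0:ℕ) < 2 ^ (n - i') := pow_pos (by norm_num) _; nlinarith⟩)
  rcases mem_dIv.1 h1 with ⟨ha1, ha2⟩
  have hp : (0:ℕ) < 2 ^ (n - i') := pow_pos (by norm_num) _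
  have hp : 0 < 2 ^ (n - i') := pow_pos (by norm_num) _
  have e1 : (a + 1) * 2 ^ (n - i') = a * 2 ^ (n - i') + 2 ^ (n - i') := by ring
  have e2 : (a' + 1) * 2 ^ (n - i') = a' * 2 ^ (n - i') + 2 ^ (n - i') := by ring
  have h2 : a' ≤ a := by
    by_contra hc
    have : (a + 1) * 2 ^ (n - i') ≤ a' * 2 ^ (n - i') := Nat.mul_le_mul_right _ (by omega)
    omega
  have h3 : a ≤ a' := by
    by_contra hc
    have : (a' + 1) * 2 ^ (n - i') ≤ a * 2 ^ (n - i') := Nat.mul_le_mul_right _ (by omega)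
    omega
  omega

end Dyadic

noncomputable section TwoD
open scoped Classical

/-- rectangle index: `(i, a, j, b)` -/
abbrev Rect4 := ℕ × ℕ × ℕ × ℕ

def xIv (n : ℕ) (r : Rect4) : Finset ℕ := dIv n r.1 r.2.1
def yIv (n : ℕ) (r : Rect4) : Finset ℕ := dIv n r.2.2.1 r.2.2.2

def cells2 (n : ℕ) (r : Rect4) : Finset (ℕ × ℕ) := (xIv n r) ×ˢ (yIv n r)

def ValidR (n : ℕ) (r : Rect4) : Prop :=
  r.1 ≤ n ∧ r.2.1 < 2 ^ r.1 ∧ r.2.2.1 ≤ n ∧ r.2.2.2 < 2 ^ r.2.2.1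

def validRects (n : ℕ) : Finset Rect4 :=
  ((Finset.range (n+1)) ×ˢ (Finset.range (2^n)) ×ˢ (Finset.range (n+1)) ×ˢ
    (Finset.range (2^n))).filter (ValidR n)

lemma mem_validRects {n : ℕ} {r : Rect4} : r ∈ validRects n ↔ ValidR n r := by
  constructor
  · intro h; exact (Finset.mem_filter.1 h).2
  · intro h
    refine Finset.mem_filter.2 ⟨?_, h⟩
    rcases h with ⟨h1, h2, h3, h4⟩
    have e2 : (2:ℕ) ^ r.1 ≤ 2 ^ n := Nat.pow_le_pow_right (by norm_num) h1
    have e4 : (2:ℕ) ^ r.2.2.1 ≤ 2 ^ n := Nat.pow_le_pow_right (by norm_num) h3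
    simp only [Finset.mem_product, Finset.mem_range]
    exact ⟨by omega, by omega, by omega, by omega⟩

def IsTiling2 (n : ℕ) (U : Finset (ℕ × ℕ)) (G : Finset Rect4) : Prop :=
  (∀ r ∈ G, ValidR n r) ∧
  (∀ r ∈ G, ∀ r' ∈ G, r ≠ r' → Disjoint (cells2 n r) (cells2 n r')) ∧
  G.biUnion (cells2 n) = U

def tilings2 (n : ℕ) (U : Finset (ℕ × ℕ)) : Finset (Finset Rect4) :=
  (validRects n).powerset.filter (IsTiling2 n U)

lemma mem_tilings2 {n : ℕ} {U : Finset (ℕ × ℕ)} {G : Finset Rect4} :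
    G ∈ tilings2 n U ↔ IsTiling2 n U G := by
  constructor
  · intro h; exact (Finset.mem_filter.1 h).2
  · intro h
    exact Finset.mem_filter.2 ⟨Finset.mem_powerset.2 (fun r hr => mem_validRects.2 (h.1 r hr)), h⟩

def Z (n : ℕ) (U : Finset (ℕ × ℕ)) : ℝ := ∑ G ∈ tilings2 n U, (8:ℝ)⁻¹ ^ G.card

lemma Z_nonneg (n : ℕ) (U : Finset (ℕ × ℕ)) : 0 ≤ Z n U :=
  Finset.sum_nonneg (fun G _ => by positivity)

lemma cells2_nonempty (n : ℕ) (r : Rect4) : (cells2 n r).Nonempty := by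
  rcases dIv_nonempty n r.1 r.2.1 with ⟨x, hx⟩
  rcases dIv_nonempty n r.2.2.1 r.2.2.2 with ⟨y, hy⟩
  exact ⟨(x, y), Finset.mem_product.2 ⟨hx, hy⟩⟩

lemma mem_cells2 {n : ℕ} {r : Rect4} {c : ℕ × ℕ} :
    c ∈ cells2 n r ↔ c.1 ∈ xIv n r ∧ c.2 ∈ yIv n r := Finset.mem_product

lemma Z_empty (n : ℕ) : Z n ∅ = 1 := by
  have : tilings2 n (∅ : Finset (ℕ × ℕ)) = {∅} := by
    apply Finset.ext
    intro G
    simp only [Finset.mem_singleton]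
    constructor
    · intro h
      rcases mem_tilings2.1 h with ⟨_, _, hU⟩
      by_contra hne
      rcases Finset.nonempty_iff_ne_empty.2 hne with ⟨r, hr⟩
      rcases cells2_nonempty n r with ⟨c, hc⟩
      have : c ∈ G.biUnion (cells2 n) := Finset.mem_biUnion.2 ⟨r, hr, hc⟩
      rw [hU] at this
      exact absurd this (Finset.notMem_empty c)
    · rintro rfl
      exact mem_tilings2.2 ⟨by simp, by simp, by simp⟩
  rw [Z, this]
  simp

/-- tiles of a tiling of `U` have cells inside `U` -/
lemma cells2_subset {n : ℕ} {U : Finset (ℕ × ℕ)} {G : Finset Rect4} (h : IsTiling2 n U G)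
    {r : Rect4} (hr : r ∈ G) : cells2 n r ⊆ U := by
  intro c hc
  rw [← h.2.2]
  exact Finset.mem_biUnion.2 ⟨r, hr, hc⟩

/-- The generic split bound: if every rectangle of the tilings considered is on one
side or the other of a cell predicate `q`, the weighted sum factors. -/
lemma sum_split (n : ℕ) (U : Finset (ℕ × ℕ)) (q : ℕ × ℕ → Prop) [DecidablePred q] :
    ∑ G ∈ (tilings2 n U).filter
        (fun G => ∀ r ∈ G, (∀ c ∈ cells2 n r, q c) ∨ (∀ c ∈ cells2 n r, ¬ q c)),
      (8:ℝ)⁻¹ ^ G.card ≤ Z n (U.filter q) * Z n (U.filter (fun c => ¬ q c)) := by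
  set s := (tilings2 n U).filter
      (fun G => ∀ r ∈ G, (∀ c ∈ cells2 n r, q c) ∨ (∀ c ∈ cells2 n r, ¬ q c)) with hs
  set e : Finset Rect4 → Finset Rect4 × Finset Rect4 :=
    fun G => (G.filter (fun r => ∀ c ∈ cells2 n r, q c),
              G.filter (fun r => ¬ ∀ c ∈ cells2 n r, q c)) with he
  have key : ∑ G ∈ s, (8:ℝ)⁻¹ ^ G.card ≤
      ∑ P ∈ (tilings2 n (U.filter q)) ×ˢ (tilings2 n (U.filter (fun c => ¬ q c))),
        (8:ℝ)⁻¹ ^ P.1.card * (8:ℝ)⁻¹ ^ P.2.card := by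
    apply sum_le_of_injOn s _ e
    · -- injectivity
      intro G hG G' hG' hee
      have h1 : G.filter (fun r => ∀ c ∈ cells2 n r, q c) =
          G'.filter (fun r => ∀ c ∈ cells2 n r, q c) := congrArg Prod.fst hee
      have h2 : G.filter (fun r => ¬ ∀ c ∈ cells2 n r, q c) =
          G'.filter (fun r => ¬ ∀ c ∈ cells2 n r, q c) := congrArg Prod.snd hee
      have hG2 := Finset.filter_union_filter_not_eq (fun r => ∀ c ∈ cells2 n r, q c) G
      have hG2' := Finset.filter_union_filter_not_eq (fun r => ∀ c ∈ cells2 n r, q c) G'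
      rw [← hG2, ← hG2', h1, h2]
    · -- maps into product
      intro G hG
      rcases Finset.mem_filter.1 hG with ⟨hG1, hG2⟩
      have hT := mem_tilings2.1 hG1
      rw [Finset.mem_product]
      constructor
      · apply mem_tilings2.2
        refine ⟨fun r hr => hT.1 r (Finset.mem_filter.1 hr).1,
               fun r hr r' hr' hne => hT.2.1 r (Finset.mem_filter.1 hr).1 r'
                 (Finset.mem_filter.1 hr').1 hne, ?_⟩
        apply Finset.ext
        intro c
        simp only [he, Finset.mem_biUnion, Finset.mem_filter]
        constructor
        · rintro ⟨r, ⟨hr, hq⟩, hc⟩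
          exact ⟨cells2_subset hT hr hc, hq c hc⟩
        · rintro ⟨hc, hqc⟩
          have : c ∈ G.biUnion (cells2 n) := by rw [hT.2.2]; exact hc
          rcases Finset.mem_biUnion.1 this with ⟨r, hr, hcr⟩
          refine ⟨r, ⟨hr, ?_⟩, hcr⟩
          rcases hG2 r hr with h | h
          · exact h
          · exact absurd hqc (h c hcr).elim
      · apply mem_tilings2.2
        refine ⟨fun r hr => hT.1 r (Finset.mem_filter.1 hr).1,
               fun r hr r' hr' hne => hT.2.1 r (Finset.mem_filter.1 hr).1 r'
                 (Finset.mem_filter.1 hr').1 hne, ?_⟩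
        apply Finset.ext
        intro c
        simp only [he, Finset.mem_biUnion, Finset.mem_filter]
        constructor
        · rintro ⟨r, ⟨hr, hq⟩, hc⟩
          refine ⟨cells2_subset hT hr hc, ?_⟩
          rcases hG2 r hr with h | h
          · exact absurd h hq
          · exact h c hc
        · rintro ⟨hc, hqc⟩
          have : c ∈ G.biUnion (cells2 n) := by rw [hT.2.2]; exact hc
          rcases Finset.mem_biUnion.1 this with ⟨r, hr, hcr⟩
          refine ⟨r, ⟨hr, ?_⟩, hcr⟩
          intro hall
          exact hqc (hall c hcr)
    · -- weights agree
      intro G hG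
      have hcard := Finset.card_filter_add_card_filter_not
        (p := fun r => ∀ c ∈ cells2 n r, q c) (s := G)
      simp only [he]
      rw [← pow_add]
      congr 1
      omega
    · intro b _; positivity
  calc ∑ G ∈ s, (8:ℝ)⁻¹ ^ G.card ≤ _ := key
    _ = Z n (U.filter q) * Z n (U.filter (fun c => ¬ q c)) := by
        rw [Finset.sum_product, Z, Z, Finset.sum_mul_sum]

end TwoD

noncomputable section C2
open scoped Classical

lemma mem_cells2' {n : ℕ} {r : Rect4} {x y : ℕ} :
    (x, y) ∈ cells2 n r ↔ x ∈ xIv n r ∧ y ∈ yIv n r := Finset.mem_product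

lemma dIv_left_mem {n i a x : ℕ} (hi : i < n) :
    x ∈ dIv n (i+1) (2*a) ↔ x ∈ dIv n i a ∧ x < (2*a+1) * 2 ^ (n - (i+1)) := by
  have hni : n - i = (n - (i+1)) + 1 := by omega
  have h1 : a * 2 ^ (n-i) = (2*a) * 2 ^ (n-(i+1)) := by rw [hni, pow_succ]; ring
  have h2 : (a+1) * 2 ^ (n-i) = (2*a+2) * 2 ^ (n-(i+1)) := by rw [hni, pow_succ]; ring
  have e1 : (2*a) * 2 ^ (n-(i+1)) + 2 ^ (n-(i+1)) = (2*a+1) * 2 ^ (n-(i+1)) := by ring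
  have e2 : (2*a+1) * 2 ^ (n-(i+1)) + 2 ^ (n-(i+1)) = (2*a+2) * 2 ^ (n-(i+1)) := by ring
  simp only [mem_dIv, h1, h2]
  omega

lemma dIv_right_mem {n i a x : ℕ} (hi : i < n) :
    x ∈ dIv n (i+1) (2*a+1) ↔ x ∈ dIv n i a ∧ (2*a+1) * 2 ^ (n - (i+1)) ≤ x := by
  have hni : n - i = (n - (i+1)) + 1 := by omega
  have h1 : a * 2 ^ (n-i) = (2*a) * 2 ^ (n-(i+1)) := by rw [hni, pow_succ]; ring
  have h2 : (a+1) * 2 ^ (n-i) = (2*a+2) * 2 ^ (n-(i+1)) := by rw [hni, pow_succ]; ring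
  have e1 : (2*a) * 2 ^ (n-(i+1)) + 2 ^ (n-(i+1)) = (2*a+1) * 2 ^ (n-(i+1)) := by ring
  have e2 : (2*a+1) * 2 ^ (n-(i+1)) + 2 ^ (n-(i+1)) = (2*a+2) * 2 ^ (n-(i+1)) := by ring
  have e3 : (2*a+1+1) * 2 ^ (n-(i+1)) = (2*a+2) * 2 ^ (n-(i+1)) := by ring
  simp only [mem_dIv, h1, h2, e3]
  omega

/-- projections of a rectangle inside a box -/
lemma rect_proj {n i a j b : ℕ} {r : Rect4}
    (h : cells2 n r ⊆ (dIv n i a) ×ˢ (dIv n j b)) :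
    xIv n r ⊆ dIv n i a ∧ yIv n r ⊆ dIv n j b := by
  rcases dIv_nonempty n r.1 r.2.1 with ⟨x0, hx0⟩
  rcases dIv_nonempty n r.2.2.1 r.2.2.2 with ⟨y0, hy0⟩
  have hx0' : x0 ∈ xIv n r := hx0
  have hy0' : y0 ∈ yIv n r := hy0
  constructor
  · intro x hx
    have := h (mem_cells2'.2 ⟨hx, hy0'⟩)
    exact (Finset.mem_product.1 this).1
  · intro y hy
    have := h (mem_cells2'.2 ⟨hx0', hy⟩)
    exact (Finset.mem_product.1 this).2

/-- if the x-interval of a valid rectangle equals `dIv n i a` (with `i ≤ n`)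
then its x-indices are `(i, a)`. -/
lemma xIv_eq_index {n i a : ℕ} {r : Rect4} (hv : ValidR n r) (hi : i ≤ n)
    (h : xIv n r = dIv n i a) : r.1 = i ∧ r.2.1 = a := by
  obtain ⟨hv1, hv2, hv3, hv4⟩ := hv
  have hcard : (2:ℕ) ^ (n - r.1) = 2 ^ (n - i) := by
    have := congrArg Finset.card h
    rwa [xIv, card_dIv, card_dIv] at this
  have h1 : r.1 = i := by
    have := Nat.pow_right_injective (le_refl 2) hcard
    omega
  refine ⟨h1, ?_⟩
  have : dIv n r.1 r.2.1 ⊆ dIv n i a := by rw [← h]; rfl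
  exact dIv_subset_eq this h1

lemma yIv_eq_index {n j b : ℕ} {r : Rect4} (hv : ValidR n r) (hj : j ≤ n)
    (h : yIv n r = dIv n j b) : r.2.2.1 = j ∧ r.2.2.2 = b := by
  obtain ⟨hv1, hv2, hv3, hv4⟩ := hv
  have hcard : (2:ℕ) ^ (n - r.2.2.1) = 2 ^ (n - j) := by
    have := congrArg Finset.card h
    rwa [yIv, card_dIv, card_dIv] at this
  have h1 : r.2.2.1 = j := by
    have := Nat.pow_right_injective (le_refl 2) hcard
    omega
  refine ⟨h1, ?_⟩
  have : dIv n r.2.2.1 r.2.2.2 ⊆ dIv n j b := by rw [← h]; rfl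
  exact dIv_subset_eq this h1

/-- a strict dyadic subinterval is strictly deeper -/
lemma dIv_strict_deeper {n i a i' a' : ℕ} (hi : i ≤ n) (hi' : i' ≤ n)
    (hsub : dIv n i' a' ⊆ dIv n i a) (hne : dIv n i' a' ≠ dIv n i a) : i + 1 ≤ i' := by
  have hle := dIv_subset_le hi hi' hsub
  rcases Nat.eq_or_lt_of_le hle with h | h
  · exfalso
    have := dIv_subset_eq hsub h.symm
    rw [← this, ← h] at hne
    exact hne rfl
  · omega

lemma dIv_singleton (n a : ℕ) : dIv n n a = {a} := by
  simp [dIv, Nat.sub_self, pow_zero, mul_one, Nat.Ico_succ_singleton]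

end C2

noncomputable section C2main
open scoped Classical

theorem Z_le_quarter (n : ℕ) : ∀ (d i a j b : ℕ) (U : Finset (ℕ × ℕ)), i ≤ n → j ≤ n →
    (n - i) + (n - j) ≤ d → U.Nonempty → U ⊆ (dIv n i a) ×ˢ (dIv n j b) →
    Z n U ≤ 1/4 := by
  intro d
  induction d with
  | zero =>
    intro i a j b U hi hj hd hne hsub
    have hii : i = n := by omega
    have hjj : j = n := by omega
    rw [hii, hjj, dIv_singleton, dIv_singleton] at hsub
    have hUeq : U = {(a, b)} := by
      rcases Finset.subset_singleton_iff.1 (by simpa using hsub) with h | h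
      · exact absurd h (Finset.nonempty_iff_ne_empty.1 hne)
      · exact h
    subst hUeq
    have hsubt : tilings2 n {(a,b)} ⊆ {({(n, a, n, b)} : Finset Rect4)} := by
      intro G hG
      rcases mem_tilings2.1 hG with ⟨hval, hdisj, hU⟩
      have hGr : ∀ r ∈ G, r = (n, a, n, b) := by
        intro r hr
        have hsubc : cells2 n r ⊆ {(a,b)} := by
          intro c hc; rw [← hU]; exact Finset.mem_biUnion.2 ⟨r, hr, hc⟩
        rcases dIv_nonempty n r.1 r.2.1 with ⟨x0, hx0⟩
        rcases dIv_nonempty n r.2.2.1 r.2.2.2 with ⟨y0, hy0⟩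
        have hx0' : x0 ∈ xIv n r := hx0
        have hy0' : y0 ∈ yIv n r := hy0
        have hx : xIv n r = {a} := by
          apply Finset.eq_singleton_iff_nonempty_unique_mem.2
          refine ⟨⟨x0, hx0'⟩, fun x hx => ?_⟩
          have hmem := hsubc (mem_cells2'.2 ⟨hx, hy0'⟩)
          have := Finset.mem_singleton.1 hmem
          exact congrArg Prod.fst this
        have hy : yIv n r = {b} := by
          apply Finset.eq_singleton_iff_nonempty_unique_mem.2
          refine ⟨⟨y0, hy0'⟩, fun y hy => ?_⟩
          have hmem := hsubc (mem_cells2'.2 ⟨hx0', hy⟩)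
          have := Finset.mem_singleton.1 hmem
          exact congrArg Prod.snd this
        have h1 := xIv_eq_index (hval r hr) (le_refl n) (by rw [hx, dIv_singleton])
        have h2 := yIv_eq_index (hval r hr) (le_refl n) (by rw [hy, dIv_singleton])
        rcases r with ⟨ri, ra, rj, rb⟩
        simp only at h1 h2
        simp [h1.1, h1.2, h2.1, h2.2, Prod.ext_iff]
      have hGne : G.Nonempty := by
        by_contra hc
        rw [Finset.not_nonempty_iff_eq_empty] at hc
        subst hc
        simp only [Finset.biUnion_empty] at hU
        exact absurd hU.symm (by simp)
      rcases hGne with ⟨r0, hr0⟩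
      have : G = {(n, a, n, b)} := by
        apply Finset.eq_singleton_iff_nonempty_unique_mem.2
        exact ⟨⟨r0, hr0⟩, fun r hr => hGr r hr⟩
      simp [this]
    calc Z n {(a,b)} ≤ ∑ G ∈ ({({(n, a, n, b)} : Finset Rect4)} : Finset (Finset Rect4)),
          (8:ℝ)⁻¹ ^ G.card := by
          apply Finset.sum_le_sum_of_subset_of_nonneg hsubt
          intro G _ _; positivity
      _ = (8:ℝ)⁻¹ ^ 1 := by simp
      _ ≤ 1/4 := by norm_num
  | succ d IH =>
    intro i a j b U hi hj hd hne hsub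
    by_cases hLx : i < n ∧ ∀ c ∈ U, c.1 < (2*a+1) * 2^(n-(i+1))
    · obtain ⟨hin, hall⟩ := hLx
      apply IH (i+1) (2*a) j b U (by omega) hj (by omega) hne
      intro c hc
      have hcb := Finset.mem_product.1 (hsub hc)
      exact Finset.mem_product.2 ⟨(dIv_left_mem hin).2 ⟨hcb.1, hall c hc⟩, hcb.2⟩
    by_cases hRx : i < n ∧ ∀ c ∈ U, (2*a+1) * 2^(n-(i+1)) ≤ c.1
    · obtain ⟨hin, hall⟩ := hRx
      apply IH (i+1) (2*a+1) j b U (by omega) hj (by omega) hne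
      intro c hc
      have hcb := Finset.mem_product.1 (hsub hc)
      exact Finset.mem_product.2 ⟨(dIv_right_mem hin).2 ⟨hcb.1, hall c hc⟩, hcb.2⟩
    by_cases hBy : j < n ∧ ∀ c ∈ U, c.2 < (2*b+1) * 2^(n-(j+1))
    · obtain ⟨hjn, hall⟩ := hBy
      apply IH i a (j+1) (2*b) U hi (by omega) (by omega) hne
      intro c hc
      have hcb := Finset.mem_product.1 (hsub hc)
      exact Finset.mem_product.2 ⟨hcb.1, (dIv_left_mem hjn).2 ⟨hcb.2, hall c hc⟩⟩
    by_cases hTy : j < n ∧ ∀ c ∈ U, (2*b+1) * 2^(n-(j+1)) ≤ c.2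
    · obtain ⟨hjn, hall⟩ := hTy
      apply IH i a (j+1) (2*b+1) U hi (by omega) (by omega) hne
      intro c hc
      have hcb := Finset.mem_product.1 (hsub hc)
      exact Finset.mem_product.2 ⟨hcb.1, (dIv_right_mem hjn).2 ⟨hcb.2, hall c hc⟩⟩
    -- main case
    · set midX := (2*a+1) * 2^(n-(i+1)) with hmidX
      set midY := (2*b+1) * 2^(n-(j+1)) with hmidY
      have hxStrad : i < n →
          (U.filter (fun c => c.1 < midX)).Nonempty ∧
          (U.filter (fun c => ¬ c.1 < midX)).Nonempty := by
        intro hin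
        constructor
        · have : ¬ ∀ c ∈ U, midX ≤ c.1 := fun h => hRx ⟨hin, h⟩
          push_neg at this
          rcases this with ⟨c, hc, hlt⟩
          exact ⟨c, Finset.mem_filter.2 ⟨hc, by omega⟩⟩
        · have : ¬ ∀ c ∈ U, c.1 < midX := fun h => hLx ⟨hin, h⟩
          push_neg at this
          rcases this with ⟨c, hc, hge⟩
          exact ⟨c, Finset.mem_filter.2 ⟨hc, by omega⟩⟩
      have hyStrad : j < n →
          (U.filter (fun c => c.2 < midY)).Nonempty ∧
          (U.filter (fun c => ¬ c.2 < midY)).Nonempty := by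
        intro hjn
        constructor
        · have : ¬ ∀ c ∈ U, midY ≤ c.2 := fun h => hTy ⟨hjn, h⟩
          push_neg at this
          rcases this with ⟨c, hc, hlt⟩
          exact ⟨c, Finset.mem_filter.2 ⟨hc, by omega⟩⟩
        · have : ¬ ∀ c ∈ U, c.2 < midY := fun h => hBy ⟨hjn, h⟩
          push_neg at this
          rcases this with ⟨c, hc, hge⟩
          exact ⟨c, Finset.mem_filter.2 ⟨hc, by omega⟩⟩
      set full : Rect4 := (i, a, j, b) with hfull
      have hcells_full : cells2 n full = (dIv n i a) ×ˢ (dIv n j b) := rfl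
      set T := tilings2 n U with hT
      set w : Finset Rect4 → ℝ := fun G => (8:ℝ)⁻¹ ^ G.card with hw
      have hwpos : ∀ G, 0 ≤ w G := fun G => by positivity
      -- decomposition
      have hdec1 : Z n U = (∑ G ∈ T.filter (fun G => full ∈ G), w G) +
          ∑ G ∈ T.filter (fun G => ¬ full ∈ G), w G :=
        (Finset.sum_filter_add_sum_filter_not T _ w).symm
      have hdec2 : ∑ G ∈ T.filter (fun G => ¬ full ∈ G), w G =
          (∑ G ∈ (T.filter (fun G => ¬ full ∈ G)).filter
              (fun G => ∃ r ∈ G, xIv n r = dIv n i a), w G) +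
          ∑ G ∈ (T.filter (fun G => ¬ full ∈ G)).filter
              (fun G => ¬ ∃ r ∈ G, xIv n r = dIv n i a), w G :=
        (Finset.sum_filter_add_sum_filter_not _ _ w).symm
      -- S1
      have hS1 : ∑ G ∈ T.filter (fun G => full ∈ G), w G ≤ 1/8 := by
        have hsub1 : T.filter (fun G => full ∈ G) ⊆ {({full} : Finset Rect4)} := by
          intro G hG
          rcases Finset.mem_filter.1 hG with ⟨hGT, hfG⟩
          have hTil := mem_tilings2.1 hGT
          have : ∀ r ∈ G, r = full := by
            intro r hr
            by_contra hner
            have hdisj := hTil.2.1 r hr full hfG hner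
            have hsubr : cells2 n r ⊆ cells2 n full := by
              rw [hcells_full]; exact (cells2_subset hTil hr).trans hsub
            rcases cells2_nonempty n r with ⟨c, hc⟩
            exact (Finset.disjoint_left.1 hdisj hc) (hsubr hc)
          rcases cells2_nonempty n full with ⟨c0, hc0⟩
          have hGne : G.Nonempty := ⟨full, hfG⟩
          have : G = {full} := by
            apply Finset.eq_singleton_iff_nonempty_unique_mem.2
            exact ⟨hGne, this⟩
          simp [this]
        calc ∑ G ∈ T.filter (fun G => full ∈ G), w G
            ≤ ∑ G ∈ ({({full} : Finset Rect4)} : Finset (Finset Rect4)), w G :=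
              Finset.sum_le_sum_of_subset_of_nonneg hsub1 (fun G _ _ => hwpos G)
          _ = (8:ℝ)⁻¹ ^ 1 := by simp [hw]
          _ ≤ 1/8 := by norm_num
      -- spanners are proper in y
      have hspanner_not_full : ∀ {G : Finset Rect4}, G ∈ T → full ∉ G → ∀ r ∈ G,
          xIv n r = dIv n i a → j + 1 ≤ r.2.2.1 := by
        intro G hGT hnf r hr hxeq
        have hTil := mem_tilings2.1 hGT
        have hv := hTil.1 r hr
        have hproj := rect_proj ((cells2_subset hTil hr).trans hsub)
        have hyne : yIv n r ≠ dIv n j b := by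
          intro heq
          have h1 := xIv_eq_index hv hi hxeq
          have h2 := yIv_eq_index hv hj heq
          have : r = full := by
            rw [hfull]
            rcases r with ⟨ri, ra, rj, rb⟩
            simp only at h1 h2
            simp [Prod.ext_iff, h1.1, h1.2, h2.1, h2.2]
          exact hnf (this ▸ hr)
        exact dIv_strict_deeper hj hv.2.2.1 hproj.2 hyne
      -- classification for A2
      have hclass2 : ∀ G ∈ (T.filter (fun G => ¬ full ∈ G)).filter
          (fun G => ∃ r ∈ G, xIv n r = dIv n i a), ∀ r ∈ G,
          (∀ c ∈ cells2 n r, c.2 < midY) ∨ (∀ c ∈ cells2 n r, ¬ c.2 < midY) := by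
        intro G hG r hr
        have hG12 := Finset.mem_filter.1 hG
        have hG1 := Finset.mem_filter.1 hG12.1
        have hGT := hG1.1
        have hnf := hG1.2
        have hspan := hG12.2
        have hTil := mem_tilings2.1 hGT
        have hv := hTil.1 r hr
        have hproj := rect_proj ((cells2_subset hTil hr).trans hsub)
        by_cases hyr : yIv n r = dIv n j b
        · exfalso
          rcases hspan with ⟨r0, hr0, hx0⟩
          by_cases hxr : xIv n r = dIv n i a
          · have h1 := xIv_eq_index hv hi hxr
            have h2 := yIv_eq_index hv hj hyr
            have : r = full := by
              rw [hfull]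
              rcases r with ⟨ri, ra, rj, rb⟩
              simp only at h1 h2
              simp [Prod.ext_iff, h1.1, h1.2, h2.1, h2.2]
            exact hnf (this ▸ hr)
          · have hproj0 := rect_proj ((cells2_subset hTil hr0).trans hsub)
            have hner : r ≠ r0 := by
              intro he; rw [he] at hxr; exact hxr hx0
            have hdisj := hTil.2.1 r hr r0 hr0 hner
            rcases dIv_nonempty n r.1 r.2.1 with ⟨xx, hxx⟩
            rcases dIv_nonempty n r0.2.2.1 r0.2.2.2 with ⟨yy, hyy⟩
            have hxx' : xx ∈ xIv n r := hxx
            have hyy' : yy ∈ yIv n r0 := hyy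
            have hc1 : (xx, yy) ∈ cells2 n r :=
              mem_cells2'.2 ⟨hxx', by rw [hyr]; exact hproj0.2 hyy'⟩
            have hc2 : (xx, yy) ∈ cells2 n r0 :=
              mem_cells2'.2 ⟨by rw [hx0]; exact hproj.1 hxx', hyy'⟩
            exact (Finset.disjoint_left.1 hdisj hc1) hc2
        · have hdeep : j + 1 ≤ r.2.2.1 := dIv_strict_deeper hj hv.2.2.1 hproj.2 hyr
          rcases dIv_half (n:=n) (i:=j) (a:=b) (i':=r.2.2.1) (a':=r.2.2.2)
              hv.2.2.1 hdeep with h | h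
          · left; intro c hc; exact h c.2 (mem_cells2.1 hc).2
          · right; intro c hc
            exact not_lt.2 (h c.2 (mem_cells2.1 hc).2)
      -- classification for A3
      have hclass3 : ∀ G ∈ (T.filter (fun G => ¬ full ∈ G)).filter
          (fun G => ¬ ∃ r ∈ G, xIv n r = dIv n i a), ∀ r ∈ G,
          (∀ c ∈ cells2 n r, c.1 < midX) ∨ (∀ c ∈ cells2 n r, ¬ c.1 < midX) := by
        intro G hG r hr
        have hG12 := Finset.mem_filter.1 hG
        have hG1 := Finset.mem_filter.1 hG12.1
        have hGT := hG1.1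
        have hnospan := hG12.2
        have hTil := mem_tilings2.1 hGT
        have hv := hTil.1 r hr
        have hproj := rect_proj ((cells2_subset hTil hr).trans hsub)
        have hxr : xIv n r ≠ dIv n i a := fun he => hnospan ⟨r, hr, he⟩
        have hdeep : i + 1 ≤ r.1 := dIv_strict_deeper hi hv.1 hproj.1 hxr
        rcases dIv_half (n:=n) (i:=i) (a:=a) (i':=r.1) (a':=r.2.1) hv.1 hdeep with h | h
        · left; intro c hc; exact h c.1 (mem_cells2.1 hc).1
        · right; intro c hc
          exact not_lt.2 (h c.1 (mem_cells2.1 hc).1)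
      -- S2 numeric bound
      have hS2 : ∑ G ∈ (T.filter (fun G => ¬ full ∈ G)).filter
          (fun G => ∃ r ∈ G, xIv n r = dIv n i a), w G ≤ 1/16 := by
        by_cases hA2ne : ((T.filter (fun G => ¬ full ∈ G)).filter
            (fun G => ∃ r ∈ G, xIv n r = dIv n i a)).Nonempty
        · -- derive j < n
          rcases hA2ne with ⟨G0, hG0⟩
          have hG12 := Finset.mem_filter.1 hG0
          have hG1 := Finset.mem_filter.1 hG12.1
          rcases hG12.2 with ⟨r0, hr0, hx0⟩
          have hdeep := hspanner_not_full hG1.1 hG1.2 r0 hr0 hx0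
          have hv0 := (mem_tilings2.1 hG1.1).1 r0 hr0
          have hv0' := hv0.2.2.1
          have hjn : j < n := by omega
          obtain ⟨hBne, hTne⟩ := hyStrad hjn
          have h14B : Z n (U.filter (fun c => c.2 < midY)) ≤ 1/4 := by
            apply IH i a (j+1) (2*b) _ hi (by omega) (by omega) hBne
            intro c hc
            rcases Finset.mem_filter.1 hc with ⟨hcU, hcy⟩
            have hcb := Finset.mem_product.1 (hsub hcU)
            exact Finset.mem_product.2 ⟨hcb.1, (dIv_left_mem hjn).2 ⟨hcb.2, hcy⟩⟩
          have h14T : Z n (U.filter (fun c => ¬ c.2 < midY)) ≤ 1/4 := by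
            apply IH i a (j+1) (2*b+1) _ hi (by omega) (by omega) hTne
            intro c hc
            rcases Finset.mem_filter.1 hc with ⟨hcU, hcy⟩
            have hcb := Finset.mem_product.1 (hsub hcU)
            exact Finset.mem_product.2 ⟨hcb.1, (dIv_right_mem hjn).2 ⟨hcb.2, by omega⟩⟩
          have hstep : ∑ G ∈ (T.filter (fun G => ¬ full ∈ G)).filter
              (fun G => ∃ r ∈ G, xIv n r = dIv n i a), w G ≤
              Z n (U.filter (fun c => c.2 < midY)) *
              Z n (U.filter (fun c => ¬ c.2 < midY)) := by
            refine le_trans (Finset.sum_le_sum_of_subset_of_nonneg ?_ ?_)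
              (sum_split n U (fun c => c.2 < midY))
            · intro G hG
              have hG12 := Finset.mem_filter.1 hG
              have hG1 := Finset.mem_filter.1 hG12.1
              exact Finset.mem_filter.2 ⟨hG1.1, hclass2 G hG⟩
            · intro G _ _; exact hwpos G
          have hmm : Z n (U.filter (fun c => c.2 < midY)) *
              Z n (U.filter (fun c => ¬ c.2 < midY)) ≤ (1/4) * (1/4) :=
            mul_le_mul h14B h14T (Z_nonneg n _) (by norm_num)
          refine hstep.trans (hmm.trans (by norm_num))
        · rw [Finset.not_nonempty_iff_eq_empty] at hA2ne
          rw [hA2ne]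
          simp
      -- S3 numeric bound
      have hS3 : ∑ G ∈ (T.filter (fun G => ¬ full ∈ G)).filter
          (fun G => ¬ ∃ r ∈ G, xIv n r = dIv n i a), w G ≤ 1/16 := by
        by_cases hA3ne : ((T.filter (fun G => ¬ full ∈ G)).filter
            (fun G => ¬ ∃ r ∈ G, xIv n r = dIv n i a)).Nonempty
        · -- derive i < n
          rcases hA3ne with ⟨G0, hG0⟩
          have hG12 := Finset.mem_filter.1 hG0
          have hG1 := Finset.mem_filter.1 hG12.1
          have hTil := mem_tilings2.1 hG1.1
          have hG0ne : G0.Nonempty := by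
            by_contra hc
            rw [Finset.not_nonempty_iff_eq_empty] at hc
            rcases hne with ⟨c, hcU⟩
            have : c ∈ G0.biUnion (cells2 n) := by rw [hTil.2.2]; exact hcU
            rw [hc] at this
            simpa using this
          rcases hG0ne with ⟨r0, hr0⟩
          have hv0 := hTil.1 r0 hr0
          have hproj0 := rect_proj ((cells2_subset hTil hr0).trans hsub)
          have hxr0 : xIv n r0 ≠ dIv n i a := fun he => hG12.2 ⟨r0, hr0, he⟩
          have hdeep := dIv_strict_deeper hi hv0.1 hproj0.1 hxr0
          have hv0'' := hv0.1
          have hin : i < n := by omega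
          obtain ⟨hLne, hRne⟩ := hxStrad hin
          have h14L : Z n (U.filter (fun c => c.1 < midX)) ≤ 1/4 := by
            apply IH (i+1) (2*a) j b _ (by omega) hj (by omega) hLne
            intro c hc
            rcases Finset.mem_filter.1 hc with ⟨hcU, hcx⟩
            have hcb := Finset.mem_product.1 (hsub hcU)
            exact Finset.mem_product.2 ⟨(dIv_left_mem hin).2 ⟨hcb.1, hcx⟩, hcb.2⟩
          have h14R : Z n (U.filter (fun c => ¬ c.1 < midX)) ≤ 1/4 := by
            apply IH (i+1) (2*a+1) j b _ (by omega) hj (by omega) hRne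
            intro c hc
            rcases Finset.mem_filter.1 hc with ⟨hcU, hcx⟩
            have hcb := Finset.mem_product.1 (hsub hcU)
            exact Finset.mem_product.2 ⟨(dIv_right_mem hin).2 ⟨hcb.1, by omega⟩, hcb.2⟩
          have hstep : ∑ G ∈ (T.filter (fun G => ¬ full ∈ G)).filter
              (fun G => ¬ ∃ r ∈ G, xIv n r = dIv n i a), w G ≤
              Z n (U.filter (fun c => c.1 < midX)) *
              Z n (U.filter (fun c => ¬ c.1 < midX)) := by
            refine le_trans (Finset.sum_le_sum_of_subset_of_nonneg ?_ ?_)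
              (sum_split n U (fun c => c.1 < midX))
            · intro G hG
              have hG12 := Finset.mem_filter.1 hG
              have hG1 := Finset.mem_filter.1 hG12.1
              exact Finset.mem_filter.2 ⟨hG1.1, hclass3 G hG⟩
            · intro G _ _; exact hwpos G
          have hmm : Z n (U.filter (fun c => c.1 < midX)) *
              Z n (U.filter (fun c => ¬ c.1 < midX)) ≤ (1/4) * (1/4) :=
            mul_le_mul h14L h14R (Z_nonneg n _) (by norm_num)
          refine hstep.trans (hmm.trans (by norm_num))
        · rw [Finset.not_nonempty_iff_eq_empty] at hA3ne
          rw [hA3ne]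
          simp
      have : Z n U ≤ 1/8 + (1/16 + 1/16) := by
        rw [hdec1, hdec2]
        have := hS1
        linarith [hS1, hS2, hS3]
      linarith

end C2main


noncomputable section ThreeD
open scoped Classical

def xi {n : ℕ} (x : TileIndex3 n) : ℕ := x.1.1.1
def xj {n : ℕ} (x : TileIndex3 n) : ℕ := x.1.1.2
def xk {n : ℕ} (x : TileIndex3 n) : ℕ := n - xi x - xj x
def xa {n : ℕ} (x : TileIndex3 n) : ℕ := x.1.2.1
def xb {n : ℕ} (x : TileIndex3 n) : ℕ := x.1.2.2.1
def xc {n : ℕ} (x : TileIndex3 n) : ℕ := x.1.2.2.2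

def cells3 {n : ℕ} (x : TileIndex3 n) : Finset (ℕ × ℕ × ℕ) :=
  dIv n (xi x) (xa x) ×ˢ ((dIv n (xj x) (xb x)) ×ˢ (dIv n (xk x) (xc x)))

def fp {n : ℕ} (x : TileIndex3 n) : Finset (ℕ × ℕ) :=
  dIv n (xi x) (xa x) ×ˢ dIv n (xj x) (xb x)

def rectOf {n : ℕ} (x : TileIndex3 n) : Rect4 := (xi x, xa x, xj x, xb x)

def zstart {n : ℕ} (x : TileIndex3 n) : ℕ := xc x * 2 ^ (n - xk x)

lemma cells2_rectOf {n : ℕ} (x : TileIndex3 n) : cells2 n (rectOf x) = fp x := rfl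

lemma mem_cells3 {n : ℕ} {x : TileIndex3 n} {u v z : ℕ} :
    (u, v, z) ∈ cells3 x ↔ (u, v) ∈ fp x ∧ z ∈ dIv n (xk x) (xc x) := by
  simp only [cells3, fp, Finset.mem_product]
  tauto

lemma zstart_mem {n : ℕ} (x : TileIndex3 n) : zstart x ∈ dIv n (xk x) (xc x) := by
  have hp : 0 < 2 ^ (n - xk x) := pow_pos (by norm_num) _
  refine mem_dIv.2 ⟨le_rfl, ?_⟩
  rw [zstart]
  have : (xc x + 1) * 2 ^ (n - xk x) = xc x * 2 ^ (n - xk x) + 2 ^ (n - xk x) := by ring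
  omega

lemma validR_rectOf {n : ℕ} (x : TileIndex3 n) : ValidR n (rectOf x) := by
  obtain ⟨h1, h2, h3, h4⟩ := x.2
  refine ⟨?_, ?_, ?_, ?_⟩
  · exact Nat.lt_succ_iff.1 x.1.1.1.2
  · exact h2
  · exact Nat.lt_succ_iff.1 x.1.1.2.2
  · exact h3

lemma tile_eq_of_rect_zstart {n : ℕ} {t t' : TileIndex3 n} (h1 : rectOf t = rectOf t')
    (h2 : zstart t = zstart t') : t = t' := by
  rw [rectOf, rectOf, Prod.ext_iff, Prod.ext_iff, Prod.ext_iff] at h1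
  obtain ⟨hi, ha, hj, hb⟩ := h1
  simp only at hi ha hj hb
  have hk : xk t = xk t' := by rw [xk, xk, hi, hj]
  rw [zstart, zstart, hk] at h2
  have hp : 0 < 2 ^ (n - xk t') := pow_pos (by norm_num) _
  have hc : xc t = xc t' := Nat.eq_of_mul_eq_mul_right hp h2
  rcases t with ⟨⟨⟨i1, j1⟩, a1, b1, c1⟩, ht⟩
  rcases t' with ⟨⟨⟨i2, j2⟩, a2, b2, c2⟩, ht'⟩
  simp only [xi, xj, xa, xb, xc] at hi hj ha hb hc
  apply Subtype.ext
  simp only [Prod.mk.injEq]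
  exact ⟨⟨Fin.ext hi, Fin.ext hj⟩, Fin.ext ha, Fin.ext hb, Fin.ext hc⟩

def IsTiling3D (n : ℕ) (U : Finset (ℕ × ℕ × ℕ)) (G : Finset (TileIndex3 n)) : Prop :=
  (∀ t ∈ G, ∀ t' ∈ G, t ≠ t' → Disjoint (cells3 t) (cells3 t')) ∧ G.biUnion cells3 = U

def tilings3 (n : ℕ) (U : Finset (ℕ × ℕ × ℕ)) : Finset (Finset (TileIndex3 n)) :=
  Finset.univ.filter (IsTiling3D n U)

lemma mem_tilings3 {n : ℕ} {U : Finset (ℕ × ℕ × ℕ)} {G : Finset (TileIndex3 n)} :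
    G ∈ tilings3 n U ↔ IsTiling3D n U G := by
  simp [tilings3]

lemma cells3_subset {n : ℕ} {U : Finset (ℕ × ℕ × ℕ)} {G : Finset (TileIndex3 n)}
    (h : IsTiling3D n U G) {t : TileIndex3 n} (ht : t ∈ G) : cells3 t ⊆ U := by
  intro c hc
  rw [← h.2]
  exact Finset.mem_biUnion.2 ⟨t, ht, hc⟩

end ThreeD

noncomputable section ThreeDMain
open scoped Classical

lemma biUnion_image' {α β γ : Type*} [DecidableEq β] [DecidableEq γ]
    (s : Finset α) (g : α → β) (f : β → Finset γ) :
    (s.image g).biUnion f = s.biUnion (fun a => f (g a)) := by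
  apply Finset.ext
  intro c
  simp only [Finset.mem_biUnion, Finset.mem_image]
  constructor
  · rintro ⟨b, ⟨a, ha, rfl⟩, hc⟩; exact ⟨a, ha, hc⟩
  · rintro ⟨a, ha, hc⟩; exact ⟨g a, ⟨a, ha, rfl⟩, hc⟩

lemma cells3_nonempty {n : ℕ} (x : TileIndex3 n) : (cells3 x).Nonempty := by
  rcases dIv_nonempty n (xi x) (xa x) with ⟨u, hu⟩
  rcases dIv_nonempty n (xj x) (xb x) with ⟨v, hv⟩
  rcases dIv_nonempty n (xk x) (xc x) with ⟨z, hz⟩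
  exact ⟨(u, v, z), mem_cells3.2 ⟨Finset.mem_product.2 ⟨hu, hv⟩, hz⟩⟩

lemma tilings3_empty (n : ℕ) : tilings3 n (∅ : Finset (ℕ × ℕ × ℕ)) = {∅} := by
  apply Finset.ext
  intro G
  simp only [Finset.mem_singleton]
  constructor
  · intro h
    rcases mem_tilings3.1 h with ⟨_, hU⟩
    by_contra hne
    rcases Finset.nonempty_iff_ne_empty.2 hne with ⟨t, ht⟩
    rcases cells3_nonempty t with ⟨c, hc⟩
    have : c ∈ G.biUnion cells3 := Finset.mem_biUnion.2 ⟨t, ht, hc⟩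
    rw [hU] at this
    exact absurd this (Finset.notMem_empty c)
  · rintro rfl
    exact mem_tilings3.2 ⟨by simp, by simp⟩

lemma div_mul_bounds {s M : ℕ} (hM : 0 < M) : s / M * M ≤ s ∧ s < (s / M + 1) * M := by
  have h1 := Nat.div_add_mod s M
  have h2 : s % M < M := Nat.mod_lt s hM
  have h3 : (s / M + 1) * M = M * (s / M) + M := by ring
  have h4 : s / M * M = M * (s / M) := Nat.mul_comm _ _
  omega

lemma dIv_zero (n : ℕ) : dIv n 0 0 = Finset.range (2 ^ n) := by
  apply Finset.ext
  intro x
  simp [dIv, Finset.mem_range]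

theorem tilesum_le_one (n : ℕ) : ∀ (m : ℕ) (U : Finset (ℕ × ℕ × ℕ)),
    U ⊆ (Finset.range (2^n)) ×ˢ ((Finset.range (2^n)) ×ˢ (Finset.range (2^n))) →
    U.card ≤ m → (∑ G ∈ tilings3 n U, (8:ℝ)⁻¹ ^ G.card) ≤ 1 := by
  intro m
  induction m with
  | zero =>
    intro U _ hUcard
    have : U = ∅ := Finset.card_eq_zero.1 (by omega)
    subst this
    rw [tilings3_empty]
    simp
  | succ m IH =>
    intro U hUsub hUcard
    by_cases hU : U.Nonempty
    swap
    · rw [Finset.not_nonempty_iff_eq_empty] at hU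
      subst hU
      rw [tilings3_empty]
      simp
    · -- minimum level and bottom region
      have himg : (U.image (fun c => c.2.2)).Nonempty := hU.image _
      set s := (U.image (fun c => c.2.2)).min' himg with hsdef
      set B := (U.filter (fun c => c.2.2 = s)).image (fun c => (c.1, c.2.1)) with hBdef
      have mem_B : ∀ u v : ℕ, ((u, v) ∈ B ↔ (u, v, s) ∈ U) := by
        intro u v
        constructor
        · intro h
          rcases Finset.mem_image.1 h with ⟨c, hc, hcv⟩
          rcases Finset.mem_filter.1 hc with ⟨hcU, hcz⟩
          have h1 : c.1 = u := congrArg Prod.fst hcv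
          have h2 : c.2.1 = v := congrArg Prod.snd hcv
          have hceq : c = (u, v, s) := by
            rw [Prod.ext_iff]
            refine ⟨h1, ?_⟩
            rw [Prod.ext_iff]
            exact ⟨h2, hcz⟩
          rwa [hceq] at hcU
        · intro h
          exact Finset.mem_image.2 ⟨(u, v, s), Finset.mem_filter.2 ⟨h, rfl⟩, rfl⟩
      have hsmin : ∀ c ∈ U, s ≤ c.2.2 := fun c hc =>
        Finset.min'_le _ _ (Finset.mem_image.2 ⟨c, hc, rfl⟩)
      have hBne : B.Nonempty := by
        rcases Finset.mem_image.1 (Finset.min'_mem _ himg) with ⟨c, hc, hcz⟩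
        refine ⟨(c.1, c.2.1), (mem_B c.1 c.2.1).2 ?_⟩
        have hcz' : c.2.2 = s := hcz.trans hsdef.symm
        have : (c.1, c.2.1, s) = c := by rw [← hcz']
        rwa [this]
      have hBgrid : B ⊆ (dIv n 0 0) ×ˢ (dIv n 0 0) := by
        intro uv huv
        rcases uv with ⟨u, v⟩
        have hc := hUsub ((mem_B u v).1 huv)
        rcases Finset.mem_product.1 hc with ⟨h1, h2⟩
        rcases Finset.mem_product.1 h2 with ⟨h3, _⟩
        rw [dIv_zero]
        exact Finset.mem_product.2 ⟨h1, h3⟩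
      -- tiles covering a level-s cell start at s
      have hstart : ∀ (G : Finset (TileIndex3 n)), IsTiling3D n U G → ∀ t ∈ G,
          ∀ u v : ℕ, (u, v, s) ∈ cells3 t → zstart t = s := by
        intro G hG t ht u v hc
        rcases mem_cells3.1 hc with ⟨hfp, hz⟩
        have h1 : zstart t ≤ s := by
          rw [zstart]; exact (mem_dIv.1 hz).1
        rcases Nat.eq_or_lt_of_le h1 with h | h
        · exact h
        · exfalso
          have hcell : (u, v, zstart t) ∈ cells3 t := mem_cells3.2 ⟨hfp, zstart_mem t⟩
          have := hsmin _ (cells3_subset hG ht hcell)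
          simp only at this
          omega
      -- the bottom layer is a 2D tiling of B
      have hfib : ∀ G ∈ tilings3 n U,
          (G.filter (fun t => zstart t = s)).image rectOf ∈ tilings2 n B := by
        intro G hG
        have hT := mem_tilings3.1 hG
        apply mem_tilings2.2
        have hinj : ∀ t ∈ G.filter (fun t => zstart t = s),
            ∀ t' ∈ G.filter (fun t => zstart t = s), rectOf t = rectOf t' → t = t' := by
          intro t ht t' ht' hr
          have h1 := (Finset.mem_filter.1 ht).2
          have h2 := (Finset.mem_filter.1 ht').2
          exact tile_eq_of_rect_zstart hr (by rw [h1, h2])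
        refine ⟨?_, ?_, ?_⟩
        · intro r hr
          rcases Finset.mem_image.1 hr with ⟨t, _, rfl⟩
          exact validR_rectOf t
        · intro r hr r' hr' hne
          rcases Finset.mem_image.1 hr with ⟨t, ht, rfl⟩
          rcases Finset.mem_image.1 hr' with ⟨t', ht', rfl⟩
          have htne : t ≠ t' := fun h => hne (by rw [h])
          have hdisj := hT.1 t (Finset.mem_filter.1 ht).1 t' (Finset.mem_filter.1 ht').1 htne
          rw [Finset.disjoint_left]
          intro uv huv huv'
          rcases uv with ⟨u, v⟩
          rw [cells2_rectOf] at huv huv'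
          have hc1 : (u, v, s) ∈ cells3 t := by
            apply mem_cells3.2
            refine ⟨huv, ?_⟩
            have := (Finset.mem_filter.1 ht).2
            rw [← this]
            exact zstart_mem t
          have hc2 : (u, v, s) ∈ cells3 t' := by
            apply mem_cells3.2
            refine ⟨huv', ?_⟩
            have := (Finset.mem_filter.1 ht').2
            rw [← this]
            exact zstart_mem t'
          exact (Finset.disjoint_left.1 hdisj hc1) hc2
        · apply Finset.ext
          intro uv
          rcases uv with ⟨u, v⟩
          rw [biUnion_image']
          simp only [Finset.mem_biUnion, Finset.mem_filter]
          constructor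
          · rintro ⟨t, ⟨htG, htz⟩, hc⟩
            rw [cells2_rectOf] at hc
            apply (mem_B u v).2
            apply cells3_subset hT htG
            apply mem_cells3.2
            refine ⟨hc, ?_⟩
            rw [← htz]
            exact zstart_mem t
          · intro huv
            have hcU := (mem_B u v).1 huv
            have : (u, v, s) ∈ G.biUnion cells3 := by rw [hT.2]; exact hcU
            rcases Finset.mem_biUnion.1 this with ⟨t, htG, hc⟩
            have hts := hstart G hT t htG u v hc
            refine ⟨t, ⟨htG, hts⟩, ?_⟩
            rw [cells2_rectOf]
            exact (mem_cells3.1 hc).1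
      -- inner bound for each fiber
      have hinner : ∀ Q ∈ tilings2 n B,
          ∑ G ∈ (tilings3 n U).filter
            (fun G => (G.filter (fun t => zstart t = s)).image rectOf = Q),
            (8:ℝ)⁻¹ ^ G.card ≤ (8:ℝ)⁻¹ ^ Q.card := by
        intro Q hQ
        have hQT := mem_tilings2.1 hQ
        set R := Q.biUnion (fun r => (dIv n r.1 r.2.1) ×ˢ ((dIv n r.2.2.1 r.2.2.2) ×ˢ
          (dIv n (n - r.1 - r.2.2.1) (s / 2 ^ (n - (n - r.1 - r.2.2.1)))))) with hRdef
        -- each lifted tile's cells equal the region term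
        have hlift : ∀ t : TileIndex3 n, zstart t = s →
            (dIv n (rectOf t).1 (rectOf t).2.1) ×ˢ ((dIv n (rectOf t).2.2.1 (rectOf t).2.2.2) ×ˢ
              (dIv n (n - (rectOf t).1 - (rectOf t).2.2.1)
                (s / 2 ^ (n - (n - (rectOf t).1 - (rectOf t).2.2.1))))) = cells3 t := by
          intro t hts
          have hk : n - (rectOf t).1 - (rectOf t).2.2.1 = xk t := rfl
          have hM : 0 < 2 ^ (n - xk t) := pow_pos (by norm_num) _
          have hc : s / 2 ^ (n - xk t) = xc t := by
            rw [← hts, zstart]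
            exact Nat.mul_div_cancel (xc t) hM
          rw [hk, hc]
          rfl
        -- the removed region meets U
        have hremove : ∃ c, c ∈ U ∧ c ∈ R := by
          rcases hBne with ⟨uv, huv⟩
          rcases uv with ⟨u, v⟩
          have : (u, v) ∈ Q.biUnion (cells2 n) := by rw [hQT.2.2]; exact huv
          rcases Finset.mem_biUnion.1 this with ⟨r, hrQ, hruv⟩
          refine ⟨(u, v, s), (mem_B u v).1 huv, ?_⟩
          rw [hRdef]
          apply Finset.mem_biUnion.2
          refine ⟨r, hrQ, ?_⟩
          rcases Finset.mem_product.1 hruv with ⟨h1, h2⟩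
          apply Finset.mem_product.2
          refine ⟨h1, Finset.mem_product.2 ⟨h2, ?_⟩⟩
          have hM : 0 < 2 ^ (n - (n - r.1 - r.2.2.1)) := pow_pos (by norm_num) _
          rcases div_mul_bounds (s := s) hM with ⟨hd1, hd2⟩
          exact mem_dIv.2 ⟨hd1, hd2⟩
        have hcardUR : (U \ R).card ≤ m := by
          rcases hremove with ⟨c, hcU, hcR⟩
          have hss : U \ R ⊂ U := by
            refine Finset.ssubset_iff_of_subset (Finset.sdiff_subset) |>.2 ?_
            exact ⟨c, hcU, by simp [hcR]⟩
          have := Finset.card_lt_card hss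
          omega
        have hsubUR : U \ R ⊆ (Finset.range (2^n)) ×ˢ ((Finset.range (2^n)) ×ˢ
            (Finset.range (2^n))) := fun c hc => hUsub (Finset.mem_sdiff.1 hc).1
        have hIH := IH (U \ R) hsubUR hcardUR
        -- injection from the fiber into tilings of U \ R
        have hkey : ∑ G ∈ (tilings3 n U).filter
            (fun G => (G.filter (fun t => zstart t = s)).image rectOf = Q),
            (8:ℝ)⁻¹ ^ G.card ≤
            ∑ G' ∈ tilings3 n (U \ R), (8:ℝ)⁻¹ ^ Q.card * (8:ℝ)⁻¹ ^ G'.card := by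
          apply sum_le_of_injOn _ _ (fun G => G.filter (fun t => ¬ zstart t = s))
          · -- injectivity
            intro G hG G' hG' he
            have hGf := Finset.mem_filter.1 hG
            have hGf' := Finset.mem_filter.1 hG'
            have hPdet : ∀ (H : Finset (TileIndex3 n)), H ∈ tilings3 n U →
                (H.filter (fun t => zstart t = s)).image rectOf = Q →
                H.filter (fun t => zstart t = s) =
                  Finset.univ.filter (fun t => rectOf t ∈ Q ∧ zstart t = s) := by
              intro H hHT hHQ
              apply Finset.ext
              intro t
              simp only [Finset.mem_filter, Finset.mem_univ, true_and]
              constructor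
              · rintro ⟨htH, hts⟩
                refine ⟨?_, hts⟩
                rw [← hHQ]
                exact Finset.mem_image.2 ⟨t, Finset.mem_filter.2 ⟨htH, hts⟩, rfl⟩
              · rintro ⟨htQ, hts⟩
                rw [← hHQ] at htQ
                rcases Finset.mem_image.1 htQ with ⟨t', ht', hrt⟩
                have hts' := (Finset.mem_filter.1 ht').2
                have : t' = t := tile_eq_of_rect_zstart hrt (by rw [hts', hts])
                rw [← this]
                exact ⟨(Finset.mem_filter.1 ht').1, hts'⟩
            have h1 := hPdet G hGf.1 hGf.2
            have h2 := hPdet G' hGf'.1 hGf'.2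
            have hu1 := Finset.filter_union_filter_not_eq (fun t => zstart t = s) G
            have hu2 := Finset.filter_union_filter_not_eq (fun t => zstart t = s) G'
            rw [← hu1, ← hu2, h1, h2, he]
          · -- maps to tilings of U \ R
            intro G hG
            have hGf := Finset.mem_filter.1 hG
            have hT := mem_tilings3.1 hGf.1
            apply mem_tilings3.2
            constructor
            · intro t ht t' ht' hne
              exact hT.1 t (Finset.mem_filter.1 ht).1 t' (Finset.mem_filter.1 ht').1 hne
            · -- biUnion = U \ R
              have hPR : (G.filter (fun t => zstart t = s)).biUnion cells3 = R := by
                rw [hRdef, ← hGf.2, biUnion_image']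
                apply Finset.biUnion_congr rfl
                intro t ht
                exact (hlift t (Finset.mem_filter.1 ht).2).symm
              apply Finset.ext
              intro c
              simp only [Finset.mem_biUnion, Finset.mem_filter, Finset.mem_sdiff]
              constructor
              · rintro ⟨t, ⟨htG, htns⟩, hc⟩
                refine ⟨cells3_subset hT htG hc, ?_⟩
                rw [← hPR]
                intro hcR
                rcases Finset.mem_biUnion.1 hcR with ⟨t', ht', hc'⟩
                have htt : t ≠ t' := by
                  intro h
                  exact htns (by rw [h]; exact (Finset.mem_filter.1 ht').2)
                exact (Finset.disjoint_left.1
                  (hT.1 t htG t' (Finset.mem_filter.1 ht').1 htt) hc) hc'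
              · rintro ⟨hcU, hcR⟩
                have : c ∈ G.biUnion cells3 := by rw [hT.2]; exact hcU
                rcases Finset.mem_biUnion.1 this with ⟨t, htG, hc⟩
                refine ⟨t, ⟨htG, ?_⟩, hc⟩
                intro hts
                apply hcR
                rw [← hPR]
                exact Finset.mem_biUnion.2 ⟨t, Finset.mem_filter.2 ⟨htG, hts⟩, hc⟩
          · -- weights
            intro G hG
            have hGf := Finset.mem_filter.1 hG
            have hQcard : Q.card = (G.filter (fun t => zstart t = s)).card := by
              rw [← hGf.2]
              apply Finset.card_image_of_injOn
              intro t ht t' ht' hr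
              exact tile_eq_of_rect_zstart hr
                (by rw [(Finset.mem_filter.1 ht).2, (Finset.mem_filter.1 ht').2])
            have hsplit := Finset.card_filter_add_card_filter_not
              (p := fun t => zstart t = s) (s := G)
            rw [← pow_add]
            congr 1
            omega
          · intro G' _
            positivity
        refine le_trans hkey ?_
        rw [← Finset.mul_sum]
        have h3 := mul_le_mul_of_nonneg_left hIH
          (show (0:ℝ) ≤ 8⁻¹ ^ Q.card by positivity)
        rw [mul_one] at h3
        exact h3
      -- assemble
      have hZB : Z n B ≤ 1/4 :=
        Z_le_quarter n (n + n) 0 0 0 0 B (by omega) (by omega) (by omega) hBne hBgrid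
      have hfw := Finset.sum_fiberwise_of_maps_to hfib (fun G => (8:ℝ)⁻¹ ^ G.card)
      rw [← hfw]
      refine le_trans (Finset.sum_le_sum hinner) ?_
      have hZeq : (∑ Q ∈ tilings2 n B, (8:ℝ)⁻¹ ^ Q.card) = Z n B := rfl
      rw [hZeq]
      linarith

end ThreeDMain

noncomputable section ProbLayer
open scoped Classical

def cubeCells (n : ℕ) : Finset (ℕ × ℕ × ℕ) :=
  (Finset.range (2^n)) ×ˢ ((Finset.range (2^n)) ×ˢ (Finset.range (2^n)))

lemma xi_xj_le {n : ℕ} (x : TileIndex3 n) : xi x + xj x ≤ n := x.2.1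
lemma xa_lt {n : ℕ} (x : TileIndex3 n) : xa x < 2 ^ xi x := x.2.2.1
lemma xb_lt {n : ℕ} (x : TileIndex3 n) : xb x < 2 ^ xj x := x.2.2.2.1
lemma xc_lt {n : ℕ} (x : TileIndex3 n) : xc x < 2 ^ xk x := x.2.2.2.2
lemma xi_le {n : ℕ} (x : TileIndex3 n) : xi x ≤ n := by have := xi_xj_le x; omega
lemma xj_le {n : ℕ} (x : TileIndex3 n) : xj x ≤ n := by have := xi_xj_le x; omega
lemma xk_le {n : ℕ} (x : TileIndex3 n) : xk x ≤ n := by rw [xk]; omega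

lemma card_cells3 {n : ℕ} (x : TileIndex3 n) : (cells3 x).card = 2 ^ (2 * n) := by
  rw [cells3, Finset.card_product, Finset.card_product, card_dIv, card_dIv, card_dIv,
    ← pow_add, ← pow_add]
  congr 1
  have h1 := xi_xj_le x
  have h2 : xk x = n - xi x - xj x := rfl
  omega

lemma cells3_subset_cube {n : ℕ} (x : TileIndex3 n) : cells3 x ⊆ cubeCells n := by
  intro c hc
  rcases c with ⟨u, v, z⟩
  rcases mem_cells3.1 hc with ⟨hfp, hz⟩
  rcases Finset.mem_product.1 hfp with ⟨hu, hv⟩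
  refine Finset.mem_product.2 ⟨dIv_subset_range (xi_le x) (xa_lt x) hu,
    Finset.mem_product.2 ⟨dIv_subset_range (xj_le x) (xb_lt x) hv,
      dIv_subset_range (xk_le x) (xc_lt x) hz⟩⟩

lemma card_cubeCells (n : ℕ) : (cubeCells n).card = 2 ^ (3 * n) := by
  rw [cubeCells, Finset.card_product, Finset.card_product, Finset.card_range,
    ← pow_add, ← pow_add]
  congr 1
  ring

lemma tiling3_card {n : ℕ} {G : Finset (TileIndex3 n)}
    (h : IsTiling3D n (cubeCells n) G) : G.card = 2 ^ n := by
  have hcard : (G.biUnion cells3).card = ∑ t ∈ G, (cells3 t).card := by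
    apply Finset.card_biUnion
    intro t ht t' ht' hne
    exact h.1 t ht t' ht' hne
  rw [h.2, card_cubeCells] at hcard
  have : ∑ t ∈ G, (cells3 t).card = G.card * 2 ^ (2 * n) := by
    rw [Finset.sum_congr rfl (fun t _ => card_cells3 t), Finset.sum_const, smul_eq_mul]
  rw [this] at hcard
  have h3 : (2:ℕ) ^ (3 * n) = 2 ^ n * 2 ^ (2 * n) := by
    rw [← pow_add]; congr 1; ring
  rw [h3] at hcard
  have hp : 0 < (2:ℕ) ^ (2 * n) := pow_pos (by norm_num) _
  exact (Nat.eq_of_mul_eq_mul_right hp hcard).symm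

lemma binomial_one {α : Type*} [DecidableEq α] (p : ℝ) (s : Finset α) :
    ∑ t ∈ s.powerset, p ^ t.card * (1 - p) ^ (s.card - t.card) = 1 := by
  have h := Finset.prod_add (fun _ : α => p) (fun _ : α => (1 - p)) s
  have hL : (∏ _i ∈ s, (p + (1 - p))) = 1 := by
    rw [Finset.prod_congr rfl (fun i _ => by ring_nf : ∀ i ∈ s, p + (1-p) = 1)]
    simp
  rw [hL] at h
  have h2 : ∀ t ∈ s.powerset, p ^ t.card * (1 - p) ^ (s.card - t.card) =
      (∏ _i ∈ t, p) * ∏ _i ∈ s \ t, (1 - p) := by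
    intro t ht
    rw [Finset.prod_const, Finset.prod_const, Finset.card_sdiff_of_subset (Finset.mem_powerset.1 ht)]
  rw [Finset.sum_congr rfl h2]
  exact h.symm

set_option maxHeartbeats 1000000 in
lemma sum_superset_weight {n : ℕ} (p : ℝ) (D : Finset (TileIndex3 n)) :
    ∑ S ∈ Finset.univ.filter (fun S : Finset (TileIndex3 n) => D ⊆ S),
      p ^ S.card * (1 - p) ^ (Fintype.card (TileIndex3 n) - S.card) = p ^ D.card := by
  set N := Fintype.card (TileIndex3 n) with hN
  have hDc : Dᶜ.card = N - D.card := by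
    rw [Finset.card_compl]
  have hbij : ∑ S ∈ Finset.univ.filter (fun S : Finset (TileIndex3 n) => D ⊆ S),
      p ^ S.card * (1 - p) ^ (N - S.card) =
      ∑ E ∈ Dᶜ.powerset, p ^ (D.card + E.card) * (1 - p) ^ (Dᶜ.card - E.card) := by
    apply Finset.sum_nbij' (fun S => S \ D) (fun E => E ∪ D)
    · intro S hS
      rw [Finset.mem_powerset]
      intro t ht
      rw [Finset.mem_compl]
      exact (Finset.mem_sdiff.1 ht).2
    · intro E hE
      apply Finset.mem_filter.2
      exact ⟨Finset.mem_univ _, Finset.subset_union_right⟩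
    · intro S hS
      have hD := (Finset.mem_filter.1 hS).2
      rw [Finset.sdiff_union_of_subset hD]
    · intro E hE
      have hE' := Finset.mem_powerset.1 hE
      apply Finset.union_sdiff_cancel_right
      rw [Finset.disjoint_left]
      intro t htE
      exact Finset.mem_compl.1 (hE' htE)
    · intro S hS
      have hD := (Finset.mem_filter.1 hS).2
      have hc : (S \ D).card = S.card - D.card := Finset.card_sdiff_of_subset hD
      have hDS : D.card ≤ S.card := Finset.card_le_card hD
      have hSN : S.card ≤ N := by
        rw [hN, ← Finset.card_univ]
        exact Finset.card_le_card (Finset.subset_univ S)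
      congr 1
      · congr 1
        omega
      · congr 1
        rw [hDc, hc]
        omega
  rw [hbij]
  have : ∑ E ∈ Dᶜ.powerset, p ^ (D.card + E.card) * (1 - p) ^ (Dᶜ.card - E.card) =
      p ^ D.card * ∑ E ∈ Dᶜ.powerset, p ^ E.card * (1 - p) ^ (Dᶜ.card - E.card) := by
    rw [Finset.mul_sum]
    apply Finset.sum_congr rfl
    intro E _
    rw [pow_add]
    ring
  rw [this, binomial_one]
  ring

end ProbLayer

noncomputable section RealBridge
open scoped Classical

/-- center of the `u`-th cell at resolution `2^n` -/
def ctr (n u : ℕ) : ℝ := ((2 * u + 1 : ℕ) : ℝ) / 2 ^ (n + 1)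

lemma pow_split {n i : ℕ} (hi : i ≤ n) : (2:ℕ) ^ (n + 1) = 2 * 2 ^ (n - i) * 2 ^ i := by
  have : 2 * 2 ^ (n - i) * 2 ^ i = 2 ^ (1 + (n - i) + i) := by
    rw [pow_add, pow_add, pow_one]
  rw [this]
  congr 1
  omega

lemma center_strict {n i a u : ℕ} (hi : i ≤ n) (hu : u ∈ dIv n i a) :
    (a : ℝ) / 2 ^ i < ctr n u ∧ ctr n u < ((a : ℝ) + 1) / 2 ^ i := by
  rcases mem_dIv.1 hu with ⟨h1, h2⟩
  have h2i : (0:ℝ) < 2 ^ i := by positivity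
  have h2n : (0:ℝ) < 2 ^ (n + 1) := by positivity
  have hsplit := pow_split (n := n) hi
  constructor
  · rw [ctr, div_lt_div_iff₀ h2i h2n]
    have hnat : a * 2 ^ (n + 1) < (2 * u + 1) * 2 ^ i := by
      rw [hsplit]
      have e1 : a * (2 * 2 ^ (n - i) * 2 ^ i) = (2 * (a * 2 ^ (n - i))) * 2 ^ i := by ring
      rw [e1]
      exact mul_lt_mul_of_pos_right (by omega) (pow_pos (by norm_num) _)
    calc (a : ℝ) * 2 ^ (n + 1) = ((a * 2 ^ (n + 1) : ℕ) : ℝ) := by push_cast; ring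
      _ < (((2 * u + 1) * 2 ^ i : ℕ) : ℝ) := by exact_mod_cast hnat
      _ = ((2 * u + 1 : ℕ) : ℝ) * 2 ^ i := by push_cast; ring
  · rw [ctr, div_lt_div_iff₀ h2n h2i]
    have hnat : (2 * u + 1) * 2 ^ i < (a + 1) * 2 ^ (n + 1) := by
      rw [hsplit]
      have e1 : (a + 1) * (2 * 2 ^ (n - i) * 2 ^ i) = (2 * ((a + 1) * 2 ^ (n - i))) * 2 ^ i := by
        ring
      rw [e1]
      exact mul_lt_mul_of_pos_right (by omega) (pow_pos (by norm_num) _)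
    calc ((2 * u + 1 : ℕ) : ℝ) * 2 ^ i = (((2 * u + 1) * 2 ^ i : ℕ) : ℝ) := by push_cast; ring
      _ < (((a + 1) * 2 ^ (n + 1) : ℕ) : ℝ) := by exact_mod_cast hnat
      _ = ((a : ℝ) + 1) * 2 ^ (n + 1) := by push_cast; ring

lemma center_of_le {n i a u : ℕ} (hi : i ≤ n)
    (h1 : (a : ℝ) / 2 ^ i ≤ ctr n u) (h2 : ctr n u ≤ ((a : ℝ) + 1) / 2 ^ i) :
    u ∈ dIv n i a := by
  have h2i : (0:ℝ) < 2 ^ i := by positivity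
  have h2n : (0:ℝ) < 2 ^ (n + 1) := by positivity
  have hsplit := pow_split (n := n) hi
  rw [ctr, div_le_div_iff₀ h2i h2n] at h1
  rw [ctr, div_le_div_iff₀ h2n h2i] at h2
  have hn1 : a * 2 ^ (n + 1) ≤ (2 * u + 1) * 2 ^ i := by
    have : ((a * 2 ^ (n + 1) : ℕ) : ℝ) ≤ (((2 * u + 1) * 2 ^ i : ℕ) : ℝ) := by
      push_cast
      push_cast at h1
      linarith
    exact_mod_cast this
  have hn2 : (2 * u + 1) * 2 ^ i ≤ (a + 1) * 2 ^ (n + 1) := by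
    have : (((2 * u + 1) * 2 ^ i : ℕ) : ℝ) ≤ (((a + 1) * 2 ^ (n + 1) : ℕ) : ℝ) := by
      push_cast
      push_cast at h2
      linarith
    exact_mod_cast this
  rw [hsplit] at hn1 hn2
  have e1 : a * (2 * 2 ^ (n - i) * 2 ^ i) = (2 * (a * 2 ^ (n - i))) * 2 ^ i := by ring
  have e2 : (a + 1) * (2 * 2 ^ (n - i) * 2 ^ i) = (2 * ((a + 1) * 2 ^ (n - i))) * 2 ^ i := by ring
  rw [e1] at hn1
  rw [e2] at hn2
  have hp : 0 < (2:ℕ) ^ i := pow_pos (by norm_num) _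
  have hc1 : 2 * (a * 2 ^ (n - i)) ≤ 2 * u + 1 := Nat.le_of_mul_le_mul_right hn1 hp
  have hc2 : 2 * u + 1 ≤ 2 * ((a + 1) * 2 ^ (n - i)) := Nat.le_of_mul_le_mul_right hn2 hp
  exact mem_dIv.2 ⟨by omega, by omega⟩

lemma interior_dyadicTile3 (i j k a b c : ℕ) :
    interior (dyadicTile3 i j k a b c) =
    Set.Ioo ((a : ℝ) / 2 ^ i) (((a : ℝ) + 1) / 2 ^ i) ×ˢ
      (Set.Ioo ((b : ℝ) / 2 ^ j) (((b : ℝ) + 1) / 2 ^ j) ×ˢ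
        Set.Ioo ((c : ℝ) / 2 ^ k) (((c : ℝ) + 1) / 2 ^ k)) := by
  rw [dyadicTile3, interior_prod_eq, interior_prod_eq, interior_Icc, interior_Icc, interior_Icc]

lemma tileOf3_eq {n : ℕ} (x : TileIndex3 n) :
    tileOf3 n x = dyadicTile3 (xi x) (xj x) (xk x) (xa x) (xb x) (xc x) := rfl

lemma mem_tile_iff_cells {n : ℕ} (x : TileIndex3 n) (u v z : ℕ) :
    (ctr n u, ctr n v, ctr n z) ∈ tileOf3 n x ↔ (u, v, z) ∈ cells3 x := by
  rw [tileOf3_eq, dyadicTile3]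
  simp only [Set.mem_prod, Set.mem_Icc]
  constructor
  · rintro ⟨⟨hu1, hu2⟩, ⟨hv1, hv2⟩, hz1, hz2⟩
    exact mem_cells3.2 ⟨Finset.mem_product.2
      ⟨center_of_le (xi_le x) hu1 hu2, center_of_le (xj_le x) hv1 hv2⟩,
      center_of_le (xk_le x) hz1 hz2⟩
  · intro hc
    rcases mem_cells3.1 hc with ⟨hfp, hz⟩
    rcases Finset.mem_product.1 hfp with ⟨hu, hv⟩
    have c1 := center_strict (xi_le x) hu
    have c2 := center_strict (xj_le x) hv
    have c3 := center_strict (xk_le x) hz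
    exact ⟨⟨le_of_lt c1.1, le_of_lt c1.2⟩, ⟨le_of_lt c2.1, le_of_lt c2.2⟩,
      le_of_lt c3.1, le_of_lt c3.2⟩

lemma mem_interior_of_cells {n : ℕ} {x : TileIndex3 n} {u v z : ℕ}
    (hc : (u, v, z) ∈ cells3 x) :
    (ctr n u, ctr n v, ctr n z) ∈ interior (tileOf3 n x) := by
  rw [tileOf3_eq, interior_dyadicTile3]
  rcases mem_cells3.1 hc with ⟨hfp, hz⟩
  rcases Finset.mem_product.1 hfp with ⟨hu, hv⟩
  have c1 := center_strict (xi_le x) hu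
  have c2 := center_strict (xj_le x) hv
  have c3 := center_strict (xk_le x) hz
  exact Set.mem_prod.2 ⟨Set.mem_Ioo.2 c1, Set.mem_prod.2
    ⟨Set.mem_Ioo.2 c2, Set.mem_Ioo.2 c3⟩⟩

lemma tileOf3_injective {n : ℕ} {x y : TileIndex3 n} (h : tileOf3 n x = tileOf3 n y) :
    x = y := by
  have hcells : cells3 x = cells3 y := by
    apply Finset.ext
    intro c
    rcases c with ⟨u, v, z⟩
    rw [← mem_tile_iff_cells, ← mem_tile_iff_cells, h]
  -- extract factor equalities
  rcases dIv_nonempty n (xi x) (xa x) with ⟨u0, hu0⟩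
  rcases dIv_nonempty n (xj x) (xb x) with ⟨v0, hv0⟩
  rcases dIv_nonempty n (xk x) (xc x) with ⟨z0, hz0⟩
  have h0 : (u0, v0, z0) ∈ cells3 y := by
    rw [← hcells]
    exact mem_cells3.2 ⟨Finset.mem_product.2 ⟨hu0, hv0⟩, hz0⟩
  rcases mem_cells3.1 h0 with ⟨hfp0, hz0'⟩
  rcases Finset.mem_product.1 hfp0 with ⟨hu0', hv0'⟩
  have hX : dIv n (xi x) (xa x) = dIv n (xi y) (xa y) := by
    apply Finset.ext
    intro u
    constructor
    · intro hu
      have : (u, v0, z0) ∈ cells3 y := by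
        rw [← hcells]
        exact mem_cells3.2 ⟨Finset.mem_product.2 ⟨hu, hv0⟩, hz0⟩
      exact (Finset.mem_product.1 (mem_cells3.1 this).1).1
    · intro hu
      have : (u, v0, z0) ∈ cells3 x := by
        rw [hcells]
        exact mem_cells3.2 ⟨Finset.mem_product.2 ⟨hu, hv0'⟩, hz0'⟩
      exact (Finset.mem_product.1 (mem_cells3.1 this).1).1
  have hY : dIv n (xj x) (xb x) = dIv n (xj y) (xb y) := by
    apply Finset.ext
    intro v
    constructor
    · intro hv
      have : (u0, v, z0) ∈ cells3 y := by
        rw [← hcells]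
        exact mem_cells3.2 ⟨Finset.mem_product.2 ⟨hu0, hv⟩, hz0⟩
      exact (Finset.mem_product.1 (mem_cells3.1 this).1).2
    · intro hv
      have : (u0, v, z0) ∈ cells3 x := by
        rw [hcells]
        exact mem_cells3.2 ⟨Finset.mem_product.2 ⟨hu0', hv⟩, hz0'⟩
      exact (Finset.mem_product.1 (mem_cells3.1 this).1).2
  have hZ : dIv n (xk x) (xc x) = dIv n (xk y) (xc y) := by
    apply Finset.ext
    intro z
    constructor
    · intro hz
      have : (u0, v0, z) ∈ cells3 y := by
        rw [← hcells]
        exact mem_cells3.2 ⟨Finset.mem_product.2 ⟨hu0, hv0⟩, hz⟩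
      exact (mem_cells3.1 this).2
    · intro hz
      have : (u0, v0, z) ∈ cells3 x := by
        rw [hcells]
        exact mem_cells3.2 ⟨Finset.mem_product.2 ⟨hu0', hv0'⟩, hz⟩
      exact (mem_cells3.1 this).2
  -- index equalities
  have hXi : xi x = xi y := by
    have hcard := congrArg Finset.card hX
    rw [card_dIv, card_dIv] at hcard
    have := Nat.pow_right_injective (le_refl 2) hcard
    have h1 := xi_le x; have h2 := xi_le y
    omega
  have hXa : xa x = xa y := dIv_subset_eq (by rw [hX]) hXi
  have hXj : xj x = xj y := by
    have hcard := congrArg Finset.card hY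
    rw [card_dIv, card_dIv] at hcard
    have := Nat.pow_right_injective (le_refl 2) hcard
    have h1 := xj_le x; have h2 := xj_le y
    omega
  have hXb : xb x = xb y := dIv_subset_eq (by rw [hY]) hXj
  have hXk : xk x = xk y := by rw [xk, xk, hXi, hXj]
  have hXc : xc x = xc y := dIv_subset_eq (by rw [hZ]) hXk
  rcases x with ⟨⟨⟨i1, j1⟩, a1, b1, c1⟩, hx⟩
  rcases y with ⟨⟨⟨i2, j2⟩, a2, b2, c2⟩, hy⟩
  simp only [xi, xj, xa, xb, xc] at hXi hXj hXa hXb hXc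
  apply Subtype.ext
  simp only [Prod.mk.injEq]
  exact ⟨⟨Fin.ext hXi, Fin.ext hXj⟩, Fin.ext hXa, Fin.ext hXb, Fin.ext hXc⟩

lemma extract_discrete {n : ℕ} {S : Finset (TileIndex3 n)} (h : TileableCube n S) :
    ∃ D : Finset (TileIndex3 n), D ⊆ S ∧ IsTiling3D n (cubeCells n) D := by
  rcases h with ⟨F, hFS, _, hFU, hFP⟩
  refine ⟨S.filter (fun x => tileOf3 n x ∈ F), Finset.filter_subset _ _, ?_, ?_⟩
  · -- disjointness
    intro x hx y hy hxy
    have htx := (Finset.mem_filter.1 hx).2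
    have hty := (Finset.mem_filter.1 hy).2
    have hneq : tileOf3 n x ≠ tileOf3 n y := fun he => hxy (tileOf3_injective he)
    have hint := hFP htx hty hneq
    rw [Finset.disjoint_left]
    intro c hcx hcy
    rcases c with ⟨u, v, z⟩
    have h1 := mem_interior_of_cells hcx
    have h2 := mem_interior_of_cells hcy
    have : (ctr n u, ctr n v, ctr n z) ∈
        interior (tileOf3 n x) ∩ interior (tileOf3 n y) := ⟨h1, h2⟩
    rw [hint] at this
    exact this
  · -- biUnion = cubeCells
    apply Finset.ext
    intro c
    rcases c with ⟨u, v, z⟩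
    simp only [Finset.mem_biUnion, Finset.mem_filter]
    constructor
    · rintro ⟨x, ⟨_, _⟩, hc⟩
      exact cells3_subset_cube x hc
    · intro hc
      rcases Finset.mem_product.1 hc with ⟨hu, hrest⟩
      rcases Finset.mem_product.1 hrest with ⟨hv, hz⟩
      rw [Finset.mem_range] at hu hv hz
      have hctr : ∀ w : ℕ, w < 2 ^ n → ctr n w ∈ Set.Icc (0:ℝ) 1 := by
        intro w hw
        constructor
        · rw [ctr]; positivity
        · rw [ctr]
          rw [div_le_one (by positivity)]
          have : (2 * w + 1 : ℕ) ≤ 2 ^ (n + 1) := by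
            have : 2 ^ (n + 1) = 2 * 2 ^ n := by rw [pow_succ]; ring
            omega
          calc ((2 * w + 1 : ℕ) : ℝ) ≤ ((2 ^ (n + 1) : ℕ) : ℝ) := by exact_mod_cast this
            _ = 2 ^ (n + 1) := by push_cast; ring
      have hpt : (ctr n u, ctr n v, ctr n z) ∈ unitCube := by
        rw [unitCube]
        exact Set.mem_prod.2 ⟨hctr u hu, Set.mem_prod.2 ⟨hctr v hv, hctr z hz⟩⟩
      rw [← hFU] at hpt
      rcases hpt with ⟨t, htF, hpt⟩
      rcases hFS t htF with ⟨x0, hx0S, rfl⟩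
      refine ⟨x0, ⟨hx0S, htF⟩, ?_⟩
      exact (mem_tile_iff_cells x0 u v z).1 hpt

end RealBridge

noncomputable section FinalBound
open scoped Classical

lemma T3_nonneg (n : ℕ) (p : ℝ) (hp0 : 0 ≤ p) (hp1 : p ≤ 1) : 0 ≤ T3 n p := by
  rw [T3]
  apply Finset.sum_nonneg
  intro S _
  split
  · have h1 : (0:ℝ) ≤ 1 - p := by linarith
    positivity
  · exact le_refl 0

set_option maxHeartbeats 1000000 in
theorem T3_le_bound (n : ℕ) (p : ℝ) (hp0 : 0 ≤ p) (hp1 : p ≤ 1) :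
    T3 n p ≤ (8 * p) ^ (2 ^ n) := by
  set N := Fintype.card (TileIndex3 n) with hN
  set w : Finset (TileIndex3 n) → ℝ := fun S => p ^ S.card * (1 - p) ^ (N - S.card) with hw
  have hwnn : ∀ S, 0 ≤ w S := by
    intro S
    have h1 : (0:ℝ) ≤ 1 - p := by linarith
    positivity
  have step1 : T3 n p ≤ ∑ S : Finset (TileIndex3 n),
      ∑ D ∈ tilings3 n (cubeCells n), (if D ⊆ S then w S else 0) := by
    rw [T3]
    apply Finset.sum_le_sum
    intro S _
    by_cases h : TileableCube n S
    · rw [if_pos h]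
      rcases extract_discrete h with ⟨D, hDS, hDT⟩
      have hD : D ∈ tilings3 n (cubeCells n) := mem_tilings3.2 hDT
      have hle := Finset.single_le_sum
        (f := fun D => if D ⊆ S then w S else 0)
        (fun D _ => by
          by_cases hds : D ⊆ S
          · simp only [if_pos hds]; exact hwnn S
          · simp only [if_neg hds]; exact le_refl 0) hD
      simp only [if_pos hDS] at hle
      exact hle
    · rw [if_neg h]
      apply Finset.sum_nonneg
      intro D _
      split
      · exact hwnn S
      · exact le_refl 0
  have step2 : ∑ S : Finset (TileIndex3 n),
      ∑ D ∈ tilings3 n (cubeCells n), (if D ⊆ S then w S else 0) =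
      ∑ D ∈ tilings3 n (cubeCells n), p ^ D.card := by
    rw [Finset.sum_comm]
    apply Finset.sum_congr rfl
    intro D hD
    have : ∑ S : Finset (TileIndex3 n), (if D ⊆ S then w S else 0) =
        ∑ S ∈ Finset.univ.filter (fun S : Finset (TileIndex3 n) => D ⊆ S), w S :=
      (Finset.sum_filter _ _).symm
    rw [this, hw]
    exact sum_superset_weight p D
  have step3 : ∑ D ∈ tilings3 n (cubeCells n), p ^ D.card =
      ((tilings3 n (cubeCells n)).card : ℝ) * p ^ (2 ^ n) := by
    rw [Finset.sum_congr rfl (fun D hD => by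
      rw [tiling3_card (mem_tilings3.1 hD)]), Finset.sum_const, nsmul_eq_mul]
  have step4 : ((tilings3 n (cubeCells n)).card : ℝ) ≤ 8 ^ (2 ^ n) := by
    have h1 := tilesum_le_one n (cubeCells n).card (cubeCells n) (by rfl) (le_refl _)
    have h2 : ∑ G ∈ tilings3 n (cubeCells n), (8:ℝ)⁻¹ ^ G.card =
        ((tilings3 n (cubeCells n)).card : ℝ) * (8:ℝ)⁻¹ ^ (2 ^ n) := by
      rw [Finset.sum_congr rfl (fun G hG => by
        rw [tiling3_card (mem_tilings3.1 hG)]), Finset.sum_const, nsmul_eq_mul]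
    rw [h2] at h1
    have h8 : (0:ℝ) < 8 ^ (2 ^ n) := by positivity
    have h8' : ((8:ℝ)⁻¹) ^ (2 ^ n) = (8 ^ (2 ^ n))⁻¹ := by
      rw [inv_pow]
    rw [h8'] at h1
    calc ((tilings3 n (cubeCells n)).card : ℝ)
        = ((tilings3 n (cubeCells n)).card : ℝ) * (8 ^ (2 ^ n))⁻¹ * 8 ^ (2 ^ n) := by
          field_simp
      _ ≤ 1 * 8 ^ (2 ^ n) := by
          apply mul_le_mul_of_nonneg_right h1 (le_of_lt h8)
      _ = 8 ^ (2 ^ n) := by ring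
  calc T3 n p ≤ ∑ S : Finset (TileIndex3 n),
      ∑ D ∈ tilings3 n (cubeCells n), (if D ⊆ S then w S else 0) := step1
    _ = ((tilings3 n (cubeCells n)).card : ℝ) * p ^ (2 ^ n) := by rw [step2, step3]
    _ ≤ 8 ^ (2 ^ n) * p ^ (2 ^ n) := by
        apply mul_le_mul_of_nonneg_right step4 (by positivity)
    _ = (8 * p) ^ (2 ^ n) := by rw [mul_pow]

end FinalBound

noncomputable section POne
open scoped Classical

def slabIdx (n c : ℕ) (hc : c < 2 ^ n) : TileIndex3 n :=
  ⟨((⟨0, Nat.succ_pos n⟩, ⟨0, Nat.succ_pos n⟩),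
    (⟨0, pow_pos (by norm_num) n⟩, ⟨0, pow_pos (by norm_num) n⟩,
     ⟨c, hc⟩)),
   by
     refine ⟨by simp, by simp, by simp, ?_⟩
     simpa using hc⟩

lemma tileOf3_slabIdx (n c : ℕ) (hc : c < 2 ^ n) :
    tileOf3 n (slabIdx n c hc) = dyadicTile3 0 0 n 0 0 c := by
  rw [tileOf3, slabIdx]
  norm_num

lemma tileable_univ (n : ℕ) : TileableCube n Finset.univ := by
  have h2n : (0:ℝ) < 2 ^ n := by positivity
  have h2n' : (1:ℕ) ≤ 2 ^ n := Nat.one_le_two_pow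
  refine ⟨{t | ∃ c : ℕ, ∃ _ : c < 2 ^ n, t = dyadicTile3 0 0 n 0 0 c}, ?_, ?_, ?_, ?_⟩
  · rintro t ⟨c, hc, rfl⟩
    exact ⟨slabIdx n c hc, Finset.mem_univ _, (tileOf3_slabIdx n c hc).symm⟩
  · rintro t ⟨c, hc, rfl⟩
    exact ⟨0, 0, n, 0, 0, c, by omega, by norm_num, by norm_num, hc, rfl⟩
  · -- union is the unit cube
    apply Set.ext
    rintro ⟨p1, p2, p3⟩
    constructor
    · rintro ⟨t, ⟨c, hc, rfl⟩, hp⟩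
      rw [dyadicTile3] at hp
      rcases hp with ⟨h1, h2, h3⟩
      simp only [Set.mem_Icc] at h1 h2 h3
      norm_num at h1 h2
      rw [unitCube]
      refine ⟨Set.mem_Icc.2 ⟨h1.1, h1.2⟩, Set.mem_Icc.2 ⟨h2.1, h2.2⟩, Set.mem_Icc.2 ⟨?_, ?_⟩⟩
      · have : (0:ℝ) ≤ (c:ℝ) / 2 ^ n := by positivity
        linarith [h3.1]
      · have hcc : ((c:ℝ) + 1) / 2 ^ n ≤ 1 := by
          rw [div_le_one h2n]
          have : (c:ℕ) + 1 ≤ 2 ^ n := hc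
          calc (c:ℝ) + 1 = ((c + 1 : ℕ) : ℝ) := by push_cast; ring
            _ ≤ ((2 ^ n : ℕ) : ℝ) := by exact_mod_cast this
            _ = 2 ^ n := by push_cast; ring
        linarith [h3.2]
    · intro hp
      rw [unitCube] at hp
      rcases hp with ⟨h1, h2, h3⟩
      simp only [Set.mem_Icc] at h1 h2 h3
      set c := min (Nat.floor (p3 * 2 ^ n)) (2 ^ n - 1) with hcdef
      have hc : c < 2 ^ n := by
        have : c ≤ 2 ^ n - 1 := min_le_right _ _
        omega
      refine ⟨dyadicTile3 0 0 n 0 0 c, ⟨c, hc, rfl⟩, ?_⟩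
      rw [dyadicTile3]
      refine ⟨Set.mem_Icc.2 ⟨by norm_num [h1.1], by norm_num [h1.2]⟩,
        Set.mem_Icc.2 ⟨by norm_num [h2.1], by norm_num [h2.2]⟩, Set.mem_Icc.2 ⟨?_, ?_⟩⟩
      · -- c / 2^n ≤ p3
        rw [div_le_iff₀ h2n]
        have hmin1 : c ≤ Nat.floor (p3 * 2 ^ n) := min_le_left _ _
        have hfl : (c:ℝ) ≤ Nat.floor (p3 * 2 ^ n) := by exact_mod_cast hmin1
        have hfl2 : (Nat.floor (p3 * 2 ^ n) : ℝ) ≤ p3 * 2 ^ n :=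
          Nat.floor_le (mul_nonneg h3.1 (le_of_lt h2n))
        linarith
      · -- p3 ≤ (c+1)/2^n
        rw [le_div_iff₀ h2n]
        by_cases hmin : Nat.floor (p3 * 2 ^ n) ≤ 2 ^ n - 1
        · have hceq : c = Nat.floor (p3 * 2 ^ n) := min_eq_left hmin
          have := Nat.lt_floor_add_one (p3 * 2 ^ n)
          rw [← hceq] at this
          linarith
        · have hge : 2 ^ n - 1 ≤ Nat.floor (p3 * 2 ^ n) := by omega
          have hceq : c = 2 ^ n - 1 := min_eq_right hge
          have hc1 : (c:ℝ) + 1 = 2 ^ n := by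
            rw [hceq, Nat.cast_sub h2n']
            push_cast
            ring
          rw [hc1]
          nlinarith [h3.2, h2n]
  · -- pairwise disjoint interiors
    rintro t1 ⟨c1, hc1, rfl⟩ t2 ⟨c2, hc2, rfl⟩ hne
    have hcc : c1 ≠ c2 := by
      intro h; exact hne (by rw [h])
    rw [interior_dyadicTile3, interior_dyadicTile3]
    apply Set.eq_empty_iff_forall_notMem.2
    rintro ⟨p1, p2, p3⟩ ⟨hm1, hm2⟩
    rcases hm1 with ⟨_, _, h31⟩
    rcases hm2 with ⟨_, _, h32⟩
    simp only [Set.mem_Ioo] at h31 h32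
    have key : ∀ a b : ℕ, a < b → ∀ y : ℝ, y < ((a:ℝ) + 1) / 2 ^ n → (b:ℝ) / 2 ^ n < y → False := by
      intro a b hab y hy1 hy2
      have : ((a:ℝ) + 1) ≤ (b:ℝ) := by
        have : (a + 1 : ℕ) ≤ b := hab
        calc (a:ℝ) + 1 = ((a + 1 : ℕ) : ℝ) := by push_cast; ring
          _ ≤ (b:ℝ) := by exact_mod_cast this
      have hdiv : ((a:ℝ) + 1) / 2 ^ n ≤ (b:ℝ) / 2 ^ n :=
        (div_le_div_iff_of_pos_right (by positivity)).2 this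
      linarith
    rcases Nat.lt_or_ge c1 c2 with h | h
    · exact key c1 c2 h p3 h31.2 h32.1
    · have h' : c2 < c1 := by omega
      exact key c2 c1 h' p3 h32.2 h31.1

end POne

noncomputable section TheEnd
open scoped Classical

lemma T3_one (n : ℕ) : T3 n 1 = 1 := by
  rw [T3]
  rw [Finset.sum_eq_single Finset.univ]
  · rw [if_pos (tileable_univ n)]
    rw [Finset.card_univ]
    simp
  · intro S _ hSne
    have hlt : S.card < Fintype.card (TileIndex3 n) := by
      rw [← Finset.card_univ]
      apply Finset.card_lt_card
      rw [Finset.ssubset_univ_iff]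
      exact hSne
    have hpos : Fintype.card (TileIndex3 n) - S.card ≠ 0 := by omega
    split
    · rw [show (1:ℝ) - 1 = 0 by ring, zero_pow hpos]
      ring
    · rfl
  · intro h
    exact absurd (Finset.mem_univ _) h

theorem part_one : ∀ p : ℝ, 0 ≤ p → p < 1 / 8 → Tendsto (fun n => T3 n p) atTop (𝓝 0) := by
  intro p hp0 hp18
  have hp1 : p ≤ 1 := by linarith
  have hbound : Tendsto (fun n : ℕ => (8 * p) ^ (2 ^ n)) atTop (𝓝 0) := by
    have h1 : Tendsto (fun k : ℕ => (8 * p) ^ k) atTop (𝓝 0) :=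
      tendsto_pow_atTop_nhds_zero_of_lt_one (by linarith) (by linarith)
    have h2 : Tendsto (fun n : ℕ => 2 ^ n) atTop atTop :=
      tendsto_pow_atTop_atTop_of_one_lt (by norm_num)
    exact h1.comp h2
  exact tendsto_of_tendsto_of_tendsto_of_le_of_le tendsto_const_nhds hbound
    (fun n => T3_nonneg n p hp0 hp1) (fun n => T3_le_bound n p hp0 hp1)

end TheEnd

/-- for `0 ≤ p < 1/8`, `T³_n(p) → 0` as `n → ∞`; in particular `p_c(3) ≥ 1/8`. -/
theorem three_dim_lower_bound :
    (∀ p : ℝ, 0 ≤ p → p < 1 / 8 → Tendsto (fun n => T3 n p) atTop (𝓝 0)) ∧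
    1 / 8 ≤ pc3 := by
  refine ⟨part_one, ?_⟩
  rw [pc3]
  apply le_csInf
  · refine ⟨1, ?_, ?_⟩
    · rw [Set.mem_Icc]; norm_num
    · have : (fun n => T3 n 1) = fun _ => (1:ℝ) := funext (fun n => T3_one n)
      rw [this]
      exact tendsto_const_nhds
  · rintro q ⟨hq1, hq2⟩
    by_contra hlt
    push_neg at hlt
    have hq0 : 0 ≤ q := (Set.mem_Icc.1 hq1).1
    have h0 := part_one q hq0 hlt
    have := tendsto_nhds_unique h0 hq2
    norm_num at this

end
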